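/- arXiv:1608.03513 — 5 statements merged into one kernel-verified Lean document; each statement's English description precedes it below -/
import Mathlib

section
/- Let 2 < n < ω and let B ∈ CA_ω be locally finite, i.e., every b ∈ B has finite dimension set Δb = {i < ω : c_i b ≠ b}. Then Nr_n B is a complete subalgebra of B: for every S ⊆ Nr_n B and every y ∈ Nr_n B, if y is the supremum of S computed in Nr_n B, then y is the supremum of S computed in B. -/
/-- Tarskian cylindric algebra operations indexed by `I` on a Boolean algebra `A`. -/
structure CylStruct (I : Type) (A : Type) [BooleanAlgebra A] where
  c : I → A → A
  d : I → I → A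
  c_bot : ∀ i, c i ⊥ = ⊥
  le_c : ∀ i x, x ≤ c i x
  c_inf_c : ∀ i x y, c i (x ⊓ c i y) = c i x ⊓ c i y
  c_comm : ∀ i j x, c i (c j x) = c j (c i x)
  d_diag : ∀ i, d i i = ⊤
  d_exch : ∀ i j k, k ≠ i → k ≠ j → d i j = c k (d i k ⊓ d k j)
  d_cell : ∀ i j x, i ≠ j → c i (d i j ⊓ x) ⊓ c i (d i j ⊓ xᶜ) = ⊥

/-- A bundled cylindric algebra with index type `I`. -/
structure CAlg (I : Type) : Type 1 where
  carrier : Type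
  [ba : BooleanAlgebra carrier]
  str : CylStruct I carrier

attribute [instance] CAlg.ba

/-- The set of `n`-neat elements of an `ω`-dimensional cylindric algebra. -/
def nrSetNat (n : ℕ) {B : Type} [BooleanAlgebra B] (cB : CylStruct ℕ B) : Set B :=
  {b | ∀ i : ℕ, n ≤ i → cB.c i b = b}

/-- The set of `n`-neat elements of an `m`-dimensional cylindric algebra. -/
def nrSetFin {m : ℕ} (n : ℕ) {B : Type} [BooleanAlgebra B] (cB : CylStruct (Fin m) B) : Set B :=
  {b | ∀ i : Fin m, n ≤ (i : ℕ) → cB.c i b = b}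

/-- `f` is a homomorphism of Boolean algebras. -/
structure IsBoolHom {A B : Type} [BooleanAlgebra A] [BooleanAlgebra B] (f : A → B) : Prop where
  map_bot : f ⊥ = ⊥
  map_top : f ⊤ = ⊤
  map_sup : ∀ x y, f (x ⊔ y) = f x ⊔ f y
  map_inf : ∀ x y, f (x ⊓ y) = f x ⊓ f y
  map_compl : ∀ x, f xᶜ = (f x)ᶜ

/-- A neat embedding of an `n`-dimensional algebra into (the `n`-neat part of) an
`ω`-dimensional one. -/
structure IsNeatEmbedNat (n : ℕ) {A B : Type} [BooleanAlgebra A] [BooleanAlgebra B]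
    (cA : CylStruct (Fin n) A) (cB : CylStruct ℕ B) (f : A → B) : Prop where
  bool : IsBoolHom f
  inj : Function.Injective f
  map_c : ∀ (i : Fin n) (x : A), f (cA.c i x) = cB.c (i : ℕ) (f x)
  map_d : ∀ i j : Fin n, f (cA.d i j) = cB.d (i : ℕ) (j : ℕ)
  range_sub : Set.range f ⊆ nrSetNat n cB

/-- A neat embedding of an `n`-dimensional algebra into (the `n`-neat part of) an
`m`-dimensional one. -/
structure IsNeatEmbedFin {m : ℕ} (n : ℕ) (h : n ≤ m) {A B : Type} [BooleanAlgebra A]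
    [BooleanAlgebra B] (cA : CylStruct (Fin n) A) (cB : CylStruct (Fin m) B)
    (f : A → B) : Prop where
  bool : IsBoolHom f
  inj : Function.Injective f
  map_c : ∀ (i : Fin n) (x : A), f (cA.c i x) = cB.c (Fin.castLE h i) (f x)
  map_d : ∀ i j : Fin n, f (cA.d i j) = cB.d (Fin.castLE h i) (Fin.castLE h j)
  range_sub : Set.range f ⊆ nrSetFin n cB

/-- `A ∈ Nr_n CA_ω`. -/
def InNrNat (n : ℕ) {A : Type} [BooleanAlgebra A] (cA : CylStruct (Fin n) A) : Prop :=
  ∃ (B : CAlg ℕ) (f : A → B.carrier),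
    IsNeatEmbedNat n cA B.str f ∧ Set.range f = nrSetNat n B.str

/-- `A ∈ S Nr_n CA_ω`. -/
def InSNrNat (n : ℕ) {A : Type} [BooleanAlgebra A] (cA : CylStruct (Fin n) A) : Prop :=
  ∃ (B : CAlg ℕ) (f : A → B.carrier), IsNeatEmbedNat n cA B.str f

/-- `A ∈ S_c Nr_n CA_ω`: `A` is a complete subalgebra of an `n`-neat reduct of a `CA_ω`. -/
def InScNrNat (n : ℕ) {A : Type} [BooleanAlgebra A] (cA : CylStruct (Fin n) A) : Prop :=
  ∃ (B : CAlg ℕ) (f : A → B.carrier), IsNeatEmbedNat n cA B.str f ∧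
    ∀ S : Set A, IsLUB S ⊤ → ∀ b ∈ nrSetNat n B.str, (∀ s ∈ S, f s ≤ b) → b = ⊤

/-- `A ∈ Nr_n CA_m`. -/
def InNrFin (n m : ℕ) (h : n ≤ m) {A : Type} [BooleanAlgebra A]
    (cA : CylStruct (Fin n) A) : Prop :=
  ∃ (B : CAlg (Fin m)) (f : A → B.carrier),
    IsNeatEmbedFin n h cA B.str f ∧ Set.range f = nrSetFin n B.str

/-- `A ∈ S Nr_n CA_m`. -/
def InSNrFin (n m : ℕ) (h : n ≤ m) {A : Type} [BooleanAlgebra A]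
    (cA : CylStruct (Fin n) A) : Prop :=
  ∃ (B : CAlg (Fin m)) (f : A → B.carrier), IsNeatEmbedFin n h cA B.str f

/-- `A ∈ S_c Nr_n CA_m`. -/
def InScNrFin (n m : ℕ) (h : n ≤ m) {A : Type} [BooleanAlgebra A]
    (cA : CylStruct (Fin n) A) : Prop :=
  ∃ (B : CAlg (Fin m)) (f : A → B.carrier), IsNeatEmbedFin n h cA B.str f ∧
    ∀ S : Set A, IsLUB S ⊤ → ∀ b ∈ nrSetFin n B.str, (∀ s ∈ S, f s ≤ b) → b = ⊤

/-- Relativized cylindrification on sets of `n`-sequences. -/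
def cylOp {n : ℕ} {U : Type} (V : Set (Fin n → U)) (i : Fin n) (X : Set (Fin n → U)) :
    Set (Fin n → U) :=
  {s ∈ V | ∃ t ∈ X, ∀ j, j ≠ i → t j = s j}

/-- Relativized diagonal element. -/
def diagSet {n : ℕ} {U : Type} (V : Set (Fin n → U)) (i j : Fin n) : Set (Fin n → U) :=
  {s ∈ V | s i = s j}

/-- `V` is a generalized cylindric space unit: a disjoint union of cartesian squares. -/
def IsGsUnit {n : ℕ} {U : Type} (V : Set (Fin n → U)) : Prop :=
  ∃ 𝒦 : Set (Set U), (∀ W ∈ 𝒦, W.Nonempty) ∧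
    (∀ W ∈ 𝒦, ∀ W' ∈ 𝒦, W ≠ W' → Disjoint W W') ∧
    V = ⋃ W ∈ 𝒦, {s | ∀ i, s i ∈ W}

/-- `f` represents the cylindric algebra `cA` as a set algebra with top element `V`. -/
structure IsRepOn {n : ℕ} {A : Type} [BooleanAlgebra A] (cA : CylStruct (Fin n) A)
    {U : Type} (V : Set (Fin n → U)) (f : A → Set (Fin n → U)) : Prop where
  inj : Function.Injective f
  map_top : f ⊤ = V
  map_bot : f ⊥ = ∅
  map_sup : ∀ x y, f (x ⊔ y) = f x ∪ f y
  map_compl : ∀ x, f xᶜ = V \ f x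
  map_c : ∀ i x, f (cA.c i x) = cylOp V i (f x)
  map_d : ∀ i j, f (cA.d i j) = diagSet V i j

/-- `A ∈ RCA_n` : `A` is representable as a generalized cylindric set algebra. -/
def Representable (n : ℕ) {A : Type} [BooleanAlgebra A] (cA : CylStruct (Fin n) A) : Prop :=
  ∃ (U : Type) (V : Set (Fin n → U)) (f : A → Set (Fin n → U)),
    IsGsUnit V ∧ IsRepOn cA V f

/-- `A ∈ CRCA_n` : completely representable. -/
def CompletelyRepresentable (n : ℕ) {A : Type} [BooleanAlgebra A]
    (cA : CylStruct (Fin n) A) : Prop :=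
  ∃ (U : Type) (V : Set (Fin n → U)) (f : A → Set (Fin n → U)),
    IsGsUnit V ∧ IsRepOn cA V f ∧
    ∀ (S : Set A) (a : A), IsLUB S a → f a = ⋃ s ∈ S, f s

/-- Cylindrification of the complex algebra over the atom structure of `A`. -/
def cmC {n : ℕ} {A : Type} [BooleanAlgebra A] (cA : CylStruct (Fin n) A) (i : Fin n)
    (S : Set {a : A // IsAtom a}) : Set {a : A // IsAtom a} :=
  {a | ∃ b ∈ S, a.1 ≤ cA.c i b.1}

/-- Diagonal elements of the complex algebra over the atom structure of `A`. -/
def cmD {n : ℕ} {A : Type} [BooleanAlgebra A] (cA : CylStruct (Fin n) A) (i j : Fin n) :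
    Set {a : A // IsAtom a} :=
  {a | a.1 ≤ cA.d i j}

/-- `cCm` is the complex algebra `Cm At A` of the atomic algebra `A`. -/
def IsComplexAlgebraOf {n : ℕ} {A : Type} [BooleanAlgebra A] (cA : CylStruct (Fin n) A)
    (cCm : CylStruct (Fin n) (Set {a : A // IsAtom a})) : Prop :=
  (∀ i S, cCm.c i S = cmC cA i S) ∧ (∀ i j, cCm.d i j = cmD cA i j)

/-- A cylindric algebra is simple if its only ideals are `{⊥}` and the whole algebra. -/
def IsSimple {n : ℕ} {A : Type} [BooleanAlgebra A] (cA : CylStruct (Fin n) A) : Prop :=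
  ∀ I : Set A, ⊥ ∈ I → (∀ x ∈ I, ∀ y ∈ I, x ⊔ y ∈ I) → (∀ x ∈ I, ∀ y, y ≤ x → y ∈ I) →
    (∀ x ∈ I, ∀ i, cA.c i x ∈ I) → I = {⊥} ∨ I = Set.univ

/-- An ultrafilter of a Boolean algebra. -/
def IsBoolUltrafilter {A : Type} [BooleanAlgebra A] (F : Set A) : Prop :=
  ⊤ ∈ F ∧ ⊥ ∉ F ∧ (∀ x ∈ F, ∀ y ∈ F, x ⊓ y ∈ F) ∧
    (∀ x ∈ F, ∀ y, x ≤ y → y ∈ F) ∧ (∀ x : A, x ∈ F ∨ xᶜ ∈ F)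
section CylAux

variable {B : Type} [BooleanAlgebra B] {I : Type} (cB : CylStruct I B)

lemma cyl_idem (i : I) (x : B) : cB.c i (cB.c i x) = cB.c i x := by
  have h := cB.c_inf_c i (cB.c i x) x
  rw [inf_idem] at h
  exact le_antisymm (h ▸ inf_le_right) (cB.le_c i _)

lemma cyl_compl_closed {i : I} {x : B} (h : cB.c i x = x) : cB.c i xᶜ = xᶜ := by
  have hb : cB.c i xᶜ ⊓ x = ⊥ := by
    calc cB.c i xᶜ ⊓ x = cB.c i xᶜ ⊓ cB.c i x := by rw [h]
    _ = cB.c i (xᶜ ⊓ cB.c i x) := (cB.c_inf_c i xᶜ x).symm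
    _ = cB.c i (xᶜ ⊓ x) := by rw [h]
    _ = ⊥ := by rw [compl_inf_eq_bot, cB.c_bot]
  have : cB.c i xᶜ ≤ xᶜ := le_compl_iff_disjoint_right.mpr (disjoint_iff.mpr hb)
  exact le_antisymm this (cB.le_c i _)

lemma cyl_disj {i : I} {s x : B} (hs : cB.c i s = s) (h : s ⊓ x = ⊥) :
    s ⊓ cB.c i x = ⊥ := by
  calc s ⊓ cB.c i x = cB.c i x ⊓ cB.c i s := by rw [hs, inf_comm]
  _ = cB.c i (x ⊓ cB.c i s) := (cB.c_inf_c i x s).symm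
  _ = cB.c i (s ⊓ x) := by rw [hs, inf_comm]
  _ = ⊥ := by rw [h, cB.c_bot]

lemma fold_le (l : List I) (x : B) : x ≤ l.foldr cB.c x := by
  induction l with
  | nil => exact le_rfl
  | cons i t ih => exact ih.trans (cB.le_c i _)

lemma fold_comm (l : List I) (i : I) (x : B) :
    cB.c i (l.foldr cB.c x) = l.foldr cB.c (cB.c i x) := by
  induction l with
  | nil => rfl
  | cons j t ih => simp only [List.foldr_cons, cB.c_comm i j, ih]

lemma fold_closed_of_mem {l : List I} {i : I} (hi : i ∈ l) (x : B) :
    cB.c i (l.foldr cB.c x) = l.foldr cB.c x := by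
  induction l with
  | nil => cases hi
  | cons j t ih =>
    rcases List.mem_cons.mp hi with rfl | hi'
    · exact cyl_idem cB i _
    · simp only [List.foldr_cons, cB.c_comm i j, ih hi']

lemma fold_disj {l : List I} {s x : B} (hs : ∀ i ∈ l, cB.c i s = s) (h : s ⊓ x = ⊥) :
    s ⊓ l.foldr cB.c x = ⊥ := by
  induction l with
  | nil => exact h
  | cons j t ih =>
    exact cyl_disj cB (hs j List.mem_cons_self)
      (ih fun i hi => hs i (List.mem_cons_of_mem j hi))

end CylAux

/-- Let `2 < n < ω` and let `B ∈ CA_ω` be locally finite (every element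
has a finite dimension set `Δb = {i | c_i b ≠ b}`).  Then `Nr_n B` is a complete
subalgebra of `B`: if `S` is a set of `n`-neat elements and `y` is an `n`-neat element
which is the supremum of `S` computed within the neat reduct `Nr_n B`, then `y` is the
supremum of `S` computed in `B`. -/
theorem nr_complete_subalgebra_of_locally_finite {B : Type} [BooleanAlgebra B] (n : ℕ)
    (hn : 2 < n) (cB : CylStruct ℕ B)
    (hlf : ∀ b : B, {i : ℕ | cB.c i b ≠ b}.Finite)
    (S : Set B) (hS : S ⊆ nrSetNat n cB) (y : B) (hy : y ∈ nrSetNat n cB)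
    (hub : ∀ s ∈ S, s ≤ y)
    (hlub : ∀ b ∈ nrSetNat n cB, (∀ s ∈ S, s ≤ b) → y ≤ b) :
    IsLUB S y := by
  constructor
  · exact fun s hs => hub s hs
  · intro b hb
    -- cylindrify bᶜ over all dimensions ≥ n in its dimension set
    set F : Finset ℕ := ((hlf bᶜ).toFinset).filter (fun i => n ≤ i) with hF
    set l : List ℕ := F.toList with hl
    set e : B := l.foldr cB.c bᶜ with he
    have hmem : ∀ i, i ∈ l ↔ (cB.c i bᶜ ≠ bᶜ ∧ n ≤ i) := by
      intro i
      simp [hl, hF, Finset.mem_toList, Finset.mem_filter, Set.Finite.mem_toFinset,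
        Set.mem_setOf_eq]
    -- e is closed under all c_j, j ≥ n
    have heclosed : ∀ j, n ≤ j → cB.c j e = e := by
      intro j hj
      by_cases hjl : j ∈ l
      · exact fold_closed_of_mem cB hjl bᶜ
      · have hfix : cB.c j bᶜ = bᶜ := by
          by_contra hne
          exact hjl ((hmem j).mpr ⟨hne, hj⟩)
        rw [he, fold_comm cB l j bᶜ, hfix]
    -- hence eᶜ is n-neat
    have hec : eᶜ ∈ nrSetNat n cB := fun j hj => cyl_compl_closed cB (heclosed j hj)
    -- every s ∈ S is below eᶜ
    have hse : ∀ s ∈ S, s ≤ eᶜ := by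
      intro s hs
      have hsneat := hS hs
      have hsb : s ⊓ bᶜ = ⊥ := by
        have : s ≤ b := hb hs
        simpa [disjoint_iff] using this.disjoint_compl_right
      have : s ⊓ e = ⊥ := by
        refine fold_disj cB (fun i hi => hsneat i ((hmem i).mp hi).2) hsb
      exact le_compl_iff_disjoint_right.mpr (disjoint_iff.mpr this)
    have hye : y ≤ eᶜ := hlub eᶜ hec hse
    have hbe : eᶜ ≤ b := by
      have : bᶜ ≤ e := fold_le cB l bᶜ
      calc eᶜ ≤ bᶜᶜ := compl_le_compl this
      _ = b := compl_compl b
    exact hye.trans hbe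
end

section
/- Let 2 < n < ω. There exists an atomic A ∈ RCA_n such that there is no injective CA_n-homomorphism from the complex algebra Cm At A (the Dedekind–MacNeille completion of the subalgebra generated by the atoms) into the canonical extension A⁺ of A. -/
/-- A homomorphism of cylindric algebras of the same dimension. -/
structure IsCylHom {I : Type} {A B : Type} [BooleanAlgebra A] [BooleanAlgebra B]
    (cA : CylStruct I A) (cB : CylStruct I B) (f : A → B) : Prop where
  bool : IsBoolHom f
  map_c : ∀ i x, f (cA.c i x) = cB.c i (f x)
  map_d : ∀ i j, f (cA.d i j) = cB.d i j

/-- Cylindrifications of the canonical extension of `A`: the complex algebra over the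
ultrafilter frame of `A`. -/
def canC {n : ℕ} {A : Type} [BooleanAlgebra A] (cA : CylStruct (Fin n) A) (i : Fin n)
    (S : Set {F : Set A // IsBoolUltrafilter F}) : Set {F : Set A // IsBoolUltrafilter F} :=
  {F | ∃ G ∈ S, ∀ g ∈ G.1, cA.c i g ∈ F.1}

/-- Diagonal elements of the canonical extension of `A`. -/
def canD {n : ℕ} {A : Type} [BooleanAlgebra A] (cA : CylStruct (Fin n) A) (i j : Fin n) :
    Set {F : Set A // IsBoolUltrafilter F} :=
  {F | cA.d i j ∈ F.1}

/-- `cP` is the canonical extension `A⁺` of `A`. -/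
def IsCanonicalExtOf {n : ℕ} {A : Type} [BooleanAlgebra A] (cA : CylStruct (Fin n) A)
    (cP : CylStruct (Fin n) (Set {F : Set A // IsBoolUltrafilter F})) : Prop :=
  (∀ i S, cP.c i S = canC cA i S) ∧ (∀ i j, cP.d i j = canD cA i j)

/- ===================== Section 1: generic CylStruct lemmas ===================== -/

namespace CylStruct

variable {I A : Type} [BooleanAlgebra A] (cA : CylStruct I A)

lemma c_c (i : I) (x : A) : cA.c i (cA.c i x) = cA.c i x := by
  have h := cA.c_inf_c i (cA.c i x) x
  rw [inf_idem] at h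
  exact le_antisymm (h ▸ inf_le_right) (cA.le_c i (cA.c i x))

lemma c_mono {x y : A} (i : I) (h : x ≤ y) : cA.c i x ≤ cA.c i y := by
  have hx : x ⊓ cA.c i y = x := inf_eq_left.mpr (h.trans (cA.le_c i y))
  calc cA.c i x = cA.c i (x ⊓ cA.c i y) := by rw [hx]
    _ = cA.c i x ⊓ cA.c i y := cA.c_inf_c i x y
    _ ≤ cA.c i y := inf_le_right

lemma c_compl_c (i : I) (x : A) : cA.c i ((cA.c i x)ᶜ) = (cA.c i x)ᶜ := by
  refine le_antisymm ?_ (cA.le_c i _)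
  have h := cA.c_inf_c i ((cA.c i x)ᶜ) x
  rw [compl_inf_eq_bot, cA.c_bot] at h
  exact (disjoint_iff.mpr h.symm).le_compl_right

lemma closed_inf (i : I) (x y : A) :
    cA.c i (cA.c i x ⊓ cA.c i y) = cA.c i x ⊓ cA.c i y := by
  rw [cA.c_inf_c i (cA.c i x) y, cA.c_c]

lemma c_sup (i : I) (x y : A) : cA.c i (x ⊔ y) = cA.c i x ⊔ cA.c i y := by
  refine le_antisymm ?_ (sup_le (cA.c_mono i le_sup_left) (cA.c_mono i le_sup_right))
  set z : A := (cA.c i x)ᶜ ⊓ (cA.c i y)ᶜ with hz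
  have hzc : cA.c i z = z := by
    conv_lhs => rw [hz, ← cA.c_compl_c i x, ← cA.c_compl_c i y]
    rw [cA.closed_inf, cA.c_compl_c, cA.c_compl_c, ← hz]
  have hdis : (x ⊔ y) ⊓ z = ⊥ := by
    rw [inf_sup_right]
    have h1 : x ⊓ z = ⊥ := by
      have : x ⊓ z ≤ cA.c i x ⊓ (cA.c i x)ᶜ :=
        inf_le_inf (cA.le_c i x) (hz ▸ inf_le_left)
      simpa [inf_compl_eq_bot] using le_bot_iff.mp (this.trans_eq inf_compl_eq_bot)
    have h2 : y ⊓ z = ⊥ := by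
      have : y ⊓ z ≤ cA.c i y ⊓ (cA.c i y)ᶜ :=
        inf_le_inf (cA.le_c i y) (hz ▸ inf_le_right)
      simpa [inf_compl_eq_bot] using le_bot_iff.mp (this.trans_eq inf_compl_eq_bot)
    rw [h1, h2, sup_idem]
  have hbot : cA.c i (x ⊔ y) ⊓ z = ⊥ := by
    calc cA.c i (x ⊔ y) ⊓ z = cA.c i (x ⊔ y) ⊓ cA.c i z := by rw [hzc]
      _ = cA.c i ((x ⊔ y) ⊓ cA.c i z) := (cA.c_inf_c i (x ⊔ y) z).symm
      _ = cA.c i ((x ⊔ y) ⊓ z) := by rw [hzc]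
      _ = ⊥ := by rw [hdis, cA.c_bot]
  have := (disjoint_iff.mpr hbot).le_compl_right
  rwa [hz, compl_inf, compl_compl, compl_compl] at this

end CylStruct

/- ===================== Section 2: ultrafilter basics ===================== -/

namespace IsBoolUltrafilter

variable {A : Type} [BooleanAlgebra A] {F : Set A}

lemma top_mem (hF : IsBoolUltrafilter F) : ⊤ ∈ F := hF.1
lemma bot_not_mem (hF : IsBoolUltrafilter F) : ⊥ ∉ F := hF.2.1
lemma inf_mem (hF : IsBoolUltrafilter F) {x y : A} (hx : x ∈ F) (hy : y ∈ F) :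
    x ⊓ y ∈ F := hF.2.2.1 x hx y hy
lemma up (hF : IsBoolUltrafilter F) {x y : A} (hx : x ∈ F) (hxy : x ≤ y) : y ∈ F :=
  hF.2.2.2.1 x hx y hxy
lemma total (hF : IsBoolUltrafilter F) (x : A) : x ∈ F ∨ xᶜ ∈ F := hF.2.2.2.2 x

lemma compl_not_mem (hF : IsBoolUltrafilter F) {x : A} (hx : x ∈ F) : xᶜ ∉ F := by
  intro hc
  exact hF.bot_not_mem (by simpa [inf_compl_eq_bot] using hF.inf_mem hx hc)

lemma not_mem_iff (hF : IsBoolUltrafilter F) {x : A} : x ∉ F ↔ xᶜ ∈ F := by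
  constructor
  · intro h; rcases hF.total x with h' | h'
    · exact absurd h' h
    · exact h'
  · intro h hx; exact hF.compl_not_mem hx h

lemma prime (hF : IsBoolUltrafilter F) {x y : A} (h : x ⊔ y ∈ F) : x ∈ F ∨ y ∈ F := by
  by_cases hx : x ∈ F
  · exact Or.inl hx
  · right
    have hxc : xᶜ ∈ F := (hF.not_mem_iff).mp hx
    have : (x ⊔ y) ⊓ xᶜ ∈ F := hF.inf_mem h hxc
    refine hF.up this ?_
    rw [inf_sup_right]
    simp [inf_compl_eq_bot]

lemma eq_of_subset (hF : IsBoolUltrafilter F) {G : Set A} (hG : IsBoolUltrafilter G)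
    (h : F ⊆ G) : F = G := by
  apply Set.Subset.antisymm h
  intro x hx
  by_contra hxF
  have : xᶜ ∈ F := (hF.not_mem_iff).mp hxF
  exact hG.compl_not_mem hx (h this)

end IsBoolUltrafilter
/- ===================== Section 3: canonical extension ===================== -/

/-- filter (as a set) in a Boolean algebra -/
def IsFilterSet {A : Type} [BooleanAlgebra A] (D : Set A) : Prop :=
  ⊤ ∈ D ∧ (∀ x ∈ D, ∀ y ∈ D, x ⊓ y ∈ D) ∧ ∀ x ∈ D, ∀ y : A, x ≤ y → y ∈ D

section Canon

variable {I A : Type} [BooleanAlgebra A] (cA : CylStruct I A)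

/-- Key extension lemma: extend a filter to an ultrafilter inside
`{g | c i g ∈ F}`. -/
lemma exists_ultra_rel (i : I) {F : Set A} (hF : IsBoolUltrafilter F) {D : Set A}
    (hD : IsFilterSet D) (hDF : ∀ d ∈ D, cA.c i d ∈ F) :
    ∃ G : Set A, IsBoolUltrafilter G ∧ D ⊆ G ∧ ∀ g ∈ G, cA.c i g ∈ F := by
  classical
  set S : Set (Set A) :=
    {E | IsFilterSet E ∧ D ⊆ E ∧ ∀ e ∈ E, cA.c i e ∈ F} with hS
  have hDS : D ∈ S := ⟨hD, le_refl _, hDF⟩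
  have hchainCond : ∀ c ⊆ S, IsChain (· ⊆ ·) c → c.Nonempty →
      ∃ ub ∈ S, ∀ s ∈ c, s ⊆ ub := by
    intro c hcS hchain hcne
    refine ⟨⋃₀ c, ?_, fun s hs => Set.subset_sUnion_of_mem hs⟩
    obtain ⟨E0, hE0⟩ := hcne
    have hE0S := hcS hE0
    refine ⟨⟨⟨E0, hE0, hE0S.1.1⟩, ?_, ?_⟩, ?_, ?_⟩
    · rintro a ⟨Ea, hEa, haa⟩ b ⟨Eb, hEb, hbb⟩
      rcases hchain.total hEa hEb with h | h
      · exact ⟨Eb, hEb, (hcS hEb).1.2.1 a (h haa) b hbb⟩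
      · exact ⟨Ea, hEa, (hcS hEa).1.2.1 a haa b (h hbb)⟩
    · rintro a ⟨Ea, hEa, haa⟩ b hab
      exact ⟨Ea, hEa, (hcS hEa).1.2.2 a haa b hab⟩
    · exact fun d hd => ⟨E0, hE0, hE0S.2.1 hd⟩
    · rintro a ⟨Ea, hEa, haa⟩
      exact (hcS hEa).2.2 a haa
  obtain ⟨M, hDM, hM⟩ := zorn_subset_nonempty S hchainCond D hDS
  have hMS : M ∈ S := hM.prop
  · 
    obtain ⟨hMfil, hDMsub, hMF⟩ := hMS
    refine ⟨M, ⟨hMfil.1, ?_, hMfil.2.1, hMfil.2.2, ?_⟩, hDM, hMF⟩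
    · intro hbot
      have := hMF ⊥ hbot
      rw [cA.c_bot] at this
      exact hF.bot_not_mem this
    · -- totality
      intro x
      by_contra hcon
      push_neg at hcon
      obtain ⟨hx, hxc⟩ := hcon
      -- for any w ∉ M, the filter generated by M and w escapes S
      have key : ∀ w : A, w ∉ M → ∃ e ∈ M, cA.c i (e ⊓ w) ∉ F := by
        intro w hw
        set E : Set A := {y | ∃ e ∈ M, e ⊓ w ≤ y} with hE
        have hEfil : IsFilterSet E := by
          refine ⟨⟨⊤, hMfil.1, le_top⟩, ?_, ?_⟩
          · rintro a ⟨e, he, hea⟩ b ⟨e', he', heb⟩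
            exact ⟨e ⊓ e', hMfil.2.1 e he e' he',
              le_inf (le_trans (inf_le_inf_right w inf_le_left) hea)
                (le_trans (inf_le_inf_right w inf_le_right) heb)⟩
          · rintro a ⟨e, he, hea⟩ b hab
            exact ⟨e, he, hea.trans hab⟩
        have hDE : D ⊆ E := fun d hd => ⟨d, hDMsub hd, inf_le_left⟩
        have hME : M ⊆ E := fun m hm => ⟨m, hm, inf_le_left⟩
        have hwE : w ∈ E := ⟨⊤, hMfil.1, by simp⟩
        have hES : E ∉ S := by
          intro hES
          have := hM.eq_of_le hES hME
          rw [← this] at hwE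
          exact hw hwE
        rw [hS] at hES
        simp only [Set.mem_setOf_eq] at hES
        push_neg at hES
        obtain ⟨y, hyE, hyF⟩ := hES hEfil hDE
        obtain ⟨e, he, hey⟩ := hyE
        refine ⟨e, he, fun hc => hyF (hF.up hc (cA.c_mono i hey))⟩
      obtain ⟨e, he, heF⟩ := key x hx
      obtain ⟨e', he', heF'⟩ := key xᶜ hxc
      have hee : e ⊓ e' ∈ M := hMfil.2.1 e he e' he'
      have hc : cA.c i (e ⊓ e') ∈ F := hMF _ hee
      have hsplit : e ⊓ e' = ((e ⊓ e') ⊓ x) ⊔ ((e ⊓ e') ⊓ xᶜ) := by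
        rw [← inf_sup_left, sup_compl_eq_top, inf_top_eq]
      rw [hsplit, cA.c_sup] at hc
      rcases hF.prime hc with h | h
      · exact heF (hF.up h (cA.c_mono i (inf_le_inf_right x inf_le_left)))
      · exact heF' (hF.up h (cA.c_mono i (inf_le_inf_right xᶜ inf_le_right)))

end Canon

section CanonStr

variable {n : ℕ} {A : Type} [BooleanAlgebra A] (cA : CylStruct (Fin n) A)

private lemma canRel_refl (i : Fin n) (F : {F : Set A // IsBoolUltrafilter F}) :
    ∀ g ∈ F.1, cA.c i g ∈ F.1 := fun g hg => F.2.up hg (cA.le_c i g)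

private lemma canRel_symm (i : Fin n) {F G : {F : Set A // IsBoolUltrafilter F}}
    (h : ∀ g ∈ G.1, cA.c i g ∈ F.1) : ∀ g ∈ F.1, cA.c i g ∈ G.1 := by
  intro f hf
  by_contra hc
  have h1 : (cA.c i f)ᶜ ∈ G.1 := (G.2.not_mem_iff).mp hc
  have h2 : cA.c i ((cA.c i f)ᶜ) ∈ F.1 := h _ h1
  rw [cA.c_compl_c] at h2
  exact F.2.compl_not_mem (F.2.up hf (cA.le_c i f)) h2

private lemma canRel_trans (i : Fin n) {F G H : {F : Set A // IsBoolUltrafilter F}}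
    (hFG : ∀ g ∈ G.1, cA.c i g ∈ F.1) (hGH : ∀ g ∈ H.1, cA.c i g ∈ G.1) :
    ∀ g ∈ H.1, cA.c i g ∈ F.1 := by
  intro g hg
  have := hFG _ (hGH g hg)
  rwa [cA.c_c] at this

/-- The canonical extension cylindric structure. -/
noncomputable def canStr : CylStruct (Fin n) (Set {F : Set A // IsBoolUltrafilter F}) where
  c := canC cA
  d := canD cA
  c_bot := by
    intro i
    ext F
    simp [canC]
  le_c := by
    intro i S F hF
    exact ⟨F, hF, canRel_refl cA i F⟩
  c_inf_c := by
    intro i X Y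
    ext F
    constructor
    · rintro ⟨G, ⟨hGX, H, hHY, hGH⟩, hFG⟩
      exact ⟨⟨G, hGX, hFG⟩, ⟨H, hHY, canRel_trans cA i hFG hGH⟩⟩
    · rintro ⟨⟨G, hGX, hFG⟩, ⟨H, hHY, hFH⟩⟩
      exact ⟨G, ⟨hGX, H, hHY, canRel_trans cA i (canRel_symm cA i hFG) hFH⟩, hFG⟩
  c_comm := by
    intro i j S
    -- by symmetry, prove one inclusion
    have main : ∀ (i j : Fin n), canC cA i (canC cA j S) ⊆ canC cA j (canC cA i S) := by
      intro i j F
      rintro ⟨G, ⟨H, hHS, hGH⟩, hFG⟩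
      set D : Set A := {y | ∃ h ∈ H.1, cA.c i h ≤ y} with hD
      have hDfil : IsFilterSet D := by
        refine ⟨⟨⊤, H.2.top_mem, le_top⟩, ?_, ?_⟩
        · rintro a ⟨h1, hh1, ha⟩ b ⟨h2, hh2, hb⟩
          refine ⟨h1 ⊓ h2, H.2.inf_mem hh1 hh2, le_inf ?_ ?_⟩
          · exact le_trans (cA.c_mono i inf_le_left) ha
          · exact le_trans (cA.c_mono i inf_le_right) hb
        · rintro a ⟨h1, hh1, ha⟩ b hab
          exact ⟨h1, hh1, ha.trans hab⟩
      have hDF : ∀ d ∈ D, cA.c j d ∈ F.1 := by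
        rintro d ⟨h, hh, hd⟩
        have h1 : cA.c j h ∈ G.1 := hGH h hh
        have h2 : cA.c i (cA.c j h) ∈ F.1 := hFG _ h1
        rw [cA.c_comm] at h2
        exact F.2.up h2 (cA.c_mono j hd)
      obtain ⟨G', hG', hDG', hG'F⟩ := exists_ultra_rel cA j F.2 hDfil hDF
      refine ⟨⟨G', hG'⟩, ⟨H, hHS, ?_⟩, hG'F⟩
      intro h hh
      exact hDG' ⟨h, hh, le_refl _⟩
    exact Set.Subset.antisymm (main i j) (main j i)
  d_diag := by
    intro i
    ext F
    simp only [canD, Set.mem_setOf_eq, Set.top_eq_univ, Set.mem_univ, iff_true]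
    rw [cA.d_diag]
    exact F.2.top_mem
  d_exch := by
    intro i j k hki hkj
    ext F
    constructor
    · intro hF
      simp only [canD, Set.mem_setOf_eq] at hF
      set D : Set A := {y | cA.d i k ⊓ cA.d k j ≤ y} with hD
      have hDfil : IsFilterSet D := by
        refine ⟨le_top, ?_, ?_⟩
        · intro a ha b hb; exact le_inf ha hb
        · intro a ha b hab; exact ha.trans hab
      have hDF : ∀ d ∈ D, cA.c k d ∈ F.1 := by
        intro d hd
        have h1 : cA.c k (cA.d i k ⊓ cA.d k j) ∈ F.1 := by
          rw [← cA.d_exch i j k hki hkj]; exact hF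
        exact F.2.up h1 (cA.c_mono k hd)
      obtain ⟨G, hG, hDG, hGF⟩ := exists_ultra_rel cA k F.2 hDfil hDF
      refine ⟨⟨G, hG⟩, ⟨?_, ?_⟩, hGF⟩
      · exact hDG inf_le_left
      · exact hDG inf_le_right
    · rintro ⟨G, ⟨hGik, hGkj⟩, hFG⟩
      simp only [canD, Set.mem_setOf_eq] at hGik hGkj ⊢
      have := hFG _ (G.2.inf_mem hGik hGkj)
      rwa [← cA.d_exch i j k hki hkj] at this
  d_cell := by
    intro i j X hij
    ext F
    simp only [Set.inf_eq_inter, Set.mem_inter_iff, Set.bot_eq_empty, Set.mem_empty_iff_false, iff_false]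
    rintro ⟨⟨G, ⟨hGd, hGX⟩, hFG⟩, ⟨G', ⟨hG'd, hG'X⟩, hFG'⟩⟩
    simp only [canD, Set.mem_setOf_eq] at hGd hG'd
    -- show G = G'
    have hsub : G.1 ⊆ G'.1 := by
      intro g hg
      by_contra hng
      have hgc : gᶜ ∈ G'.1 := (G'.2.not_mem_iff).mp hng
      have h1 : cA.c i (cA.d i j ⊓ g) ∈ F.1 := hFG _ (G.2.inf_mem hGd hg)
      have h2 : cA.c i (cA.d i j ⊓ gᶜ) ∈ F.1 := hFG' _ (G'.2.inf_mem hG'd hgc)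
      have := F.2.inf_mem h1 h2
      rw [cA.d_cell i j g hij] at this
      exact F.2.bot_not_mem this
    have : G = G' := Subtype.ext (G.2.eq_of_subset G'.2 hsub)
    rw [this] at hGX
    exact hG'X hGX

lemma canStr_isCanonicalExtOf : IsCanonicalExtOf cA (canStr cA) :=
  ⟨fun _ _ => rfl, fun _ _ => rfl⟩

end CanonStr
/- ===================== Section 4: the concrete algebra ===================== -/

namespace Stmt11

noncomputable section


variable (n : ℕ)

/-- number of transversals -/
def qq : ℕ := n ^ n + 1

/-- size of the base of each square -/
def Wsz : ℕ := qq n + 2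

lemma n_lt_Wsz : n < Wsz n := by
  rcases Nat.eq_zero_or_pos n with h | h
  · simp [h, Wsz, qq]
  · have : n ≤ n ^ n := by
      calc n = n ^ 1 := (pow_one n).symm
        _ ≤ n ^ n := Nat.pow_le_pow_right h h
    simp only [Wsz, qq]; omega

abbrev Uty := ℕ × Fin (Wsz n)

def VP : Set (Fin n → Uty n) := {s | ∀ i j : Fin n, (s i).1 = (s j).1}

abbrev Pt := {s : Fin n → Uty n // s ∈ VP n}

variable {n}

/-- `t` and `s` agree off coordinate `i` (and hence lie on a common `i`-line). -/
def lineEq (i : Fin n) (t s : Pt n) : Prop := ∀ j, j ≠ i → t.1 j = s.1 j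

lemma lineEq_refl (i : Fin n) (s : Pt n) : lineEq i s s := fun _ _ => rfl

lemma lineEq_symm {i : Fin n} {t s : Pt n} (h : lineEq i t s) : lineEq i s t :=
  fun j hj => (h j hj).symm

lemma lineEq_trans {i : Fin n} {t s u : Pt n} (h : lineEq i t s) (h' : lineEq i s u) :
    lineEq i t u := fun j hj => (h j hj).trans (h' j hj)

/-- cylindrification on sets of points -/
def copS (i : Fin n) (X : Set (Pt n)) : Set (Pt n) := {s | ∃ t ∈ X, lineEq i t s}

/-- diagonal set -/
def dS (i j : Fin n) : Set (Pt n) := {s | s.1 i = s.1 j}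

/-- update coordinate `i` (staying in the same square) -/
def upd (s : Pt n) (i : Fin n) (v : Fin (Wsz n)) : Pt n :=
  ⟨fun j => if j = i then ((s.1 i).1, v) else s.1 j, by
    intro k l
    by_cases hk : k = i <;> by_cases hl : l = i <;>
      simp only [hk, hl, if_pos, if_neg, ite_true, ite_false] <;>
      first
        | rfl
        | exact s.2 i l
        | exact s.2 k i
        | exact s.2 k l⟩

lemma upd_apply_ne (s : Pt n) (i : Fin n) (v : Fin (Wsz n)) {j : Fin n} (hj : j ≠ i) :
    (upd s i v).1 j = s.1 j := by simp [upd, hj]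

lemma upd_apply_self (s : Pt n) (i : Fin n) (v : Fin (Wsz n)) :
    (upd s i v).1 i = ((s.1 i).1, v) := by simp [upd]

lemma lineEq_upd (s : Pt n) (i : Fin n) (v : Fin (Wsz n)) : lineEq i (upd s i v) s :=
  fun j hj => upd_apply_ne s i v hj

lemma exists_ne_index (hn : 2 < n) (i : Fin n) : ∃ j : Fin n, j ≠ i := by
  haveI : Nontrivial (Fin n) := Fin.nontrivial_iff_two_le.mpr (by omega)
  exact exists_ne i

lemma lineEq_square (hn : 2 < n) {i : Fin n} {t s : Pt n} (h : lineEq i t s) (k : Fin n) :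
    (t.1 k).1 = (s.1 k).1 := by
  obtain ⟨j, hj⟩ := exists_ne_index hn i
  calc (t.1 k).1 = (t.1 j).1 := t.2 k j
    _ = (s.1 j).1 := by rw [h j hj]
    _ = (s.1 k).1 := s.2 j k

lemma lineEq_eq_upd (hn : 2 < n) {i : Fin n} {t s : Pt n} (h : lineEq i t s) :
    s = upd t i ((s.1 i).2) := by
  apply Subtype.ext
  funext j
  by_cases hj : j = i
  · rw [hj, upd_apply_self]
    exact Prod.ext (lineEq_square hn h i).symm rfl
  · rw [upd_apply_ne t i _ hj, h j hj]

lemma copS_finite {i : Fin n} {X : Set (Pt n)} (hn : 2 < n) (h : X.Finite) :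
    (copS i X).Finite := by
  have : copS i X ⊆ ⋃ t ∈ X, Set.range (fun v => upd t i v) := by
    intro s ⟨t, htX, hline⟩
    exact Set.mem_biUnion htX ⟨(s.1 i).2, (lineEq_eq_upd hn hline).symm⟩
  exact ((h.biUnion (fun t _ => Set.finite_range _)).subset this)

/-- representative function of the kernel of a point -/
def repF (s : Pt n) : Fin n → Fin n :=
  fun i => (Finset.univ.filter (fun j => s.1 j = s.1 i)).min'
    ⟨i, Finset.mem_filter.mpr ⟨Finset.mem_univ i, rfl⟩⟩

lemma repF_spec (s : Pt n) (i : Fin n) : s.1 (repF s i) = s.1 i := by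
  have := Finset.min'_mem (Finset.univ.filter (fun j => s.1 j = s.1 i))
    ⟨i, Finset.mem_filter.mpr ⟨Finset.mem_univ i, rfl⟩⟩
  exact (Finset.mem_filter.mp this).2

lemma repF_eq_of_eq {s : Pt n} {k l : Fin n} (h : s.1 k = s.1 l) : repF s k = repF s l := by
  unfold repF
  congr 1
  ext j
  simp [h]

lemma repF_eq_iff (s : Pt n) (k l : Fin n) : repF s k = repF s l ↔ s.1 k = s.1 l := by
  constructor
  · intro h
    calc s.1 k = s.1 (repF s k) := (repF_spec s k).symm
      _ = s.1 (repF s l) := by rw [h]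
      _ = s.1 l := repF_spec s l
  · exact repF_eq_of_eq

lemma repF_congr {s t : Pt n} (h : ∀ k l, s.1 k = s.1 l ↔ t.1 k = t.1 l) :
    repF s = repF t := by
  funext i
  unfold repF
  congr 1
  ext j
  simp only [Finset.mem_filter, Finset.mem_univ, true_and]
  exact h j i

lemma kernel_eq_of_repF {s t : Pt n} (h : repF s = repF t) (k l : Fin n) :
    s.1 k = s.1 l ↔ t.1 k = t.1 l := by
  rw [← repF_eq_iff, ← repF_eq_iff, h]

variable (n) in
/-- region of a given kernel -/
def Rg (κ : Fin n → Fin n) : Set (Pt n) := {s | repF s = κ}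

variable (n) in
/-- the algebra: sets that are finite or cofinite within each kernel region -/
def Ac : Set (Set (Pt n)) := {X | ∀ κ, (X ∩ Rg n κ).Finite ∨ (Rg n κ \ X).Finite}

lemma finite_mem_Ac {X : Set (Pt n)} (h : X.Finite) : X ∈ Ac n :=
  fun _ => Or.inl (h.subset Set.inter_subset_left)

lemma bot_mem_Ac : (∅ : Set (Pt n)) ∈ Ac n := finite_mem_Ac (Set.finite_empty)

lemma top_mem_Ac : (Set.univ : Set (Pt n)) ∈ Ac n :=
  fun κ => Or.inr (by simp)

lemma compl_mem_Ac {X : Set (Pt n)} (h : X ∈ Ac n) : Xᶜ ∈ Ac n := by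
  intro κ
  rcases h κ with h' | h'
  · right
    refine h'.subset ?_
    intro s ⟨hs1, hs2⟩
    exact ⟨Set.not_notMem.mp hs2, hs1⟩
  · left
    refine h'.subset ?_
    intro s ⟨hs1, hs2⟩
    exact ⟨hs2, hs1⟩

lemma inter_mem_Ac {X Y : Set (Pt n)} (hX : X ∈ Ac n) (hY : Y ∈ Ac n) : X ∩ Y ∈ Ac n := by
  intro κ
  rcases hX κ with h1 | h1
  · exact Or.inl (h1.subset (fun s hs => ⟨hs.1.1, hs.2⟩))
  · rcases hY κ with h2 | h2
    · exact Or.inl (h2.subset (fun s hs => ⟨hs.1.2, hs.2⟩))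
    · refine Or.inr ((h1.union h2).subset ?_)
      intro s ⟨hs1, hs2⟩
      by_cases hsX : s ∈ X
      · exact Or.inr ⟨hs1, fun hY' => hs2 ⟨hsX, hY'⟩⟩
      · exact Or.inl ⟨hs1, hsX⟩

lemma union_mem_Ac {X Y : Set (Pt n)} (hX : X ∈ Ac n) (hY : Y ∈ Ac n) : X ∪ Y ∈ Ac n := by
  have := compl_mem_Ac (inter_mem_Ac (compl_mem_Ac hX) (compl_mem_Ac hY))
  rwa [← Set.compl_union, compl_compl] at this

lemma dS_mem_Ac (i j : Fin n) : dS i j ∈ Ac n := by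
  intro κ
  by_cases hκ : κ i = κ j
  · right
    refine Set.Finite.subset (Set.finite_empty) ?_
    intro s ⟨hs1, hs2⟩
    refine hs2 ?_
    have : repF s i = repF s j := by rw [hs1, hκ]
    exact (repF_eq_iff s i j).mp this
  · left
    refine Set.Finite.subset (Set.finite_empty) ?_
    intro s ⟨hs1, hs2⟩
    refine hκ ?_
    rw [← hs2]
    exact (repF_eq_iff s i j).mpr hs1

lemma Rg_mem_Ac (κ : Fin n → Fin n) : Rg n κ ∈ Ac n := by
  intro κ'
  by_cases h : κ' = κ
  · right
    refine Set.Finite.subset (Set.finite_empty) ?_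
    rintro s ⟨hs1, hs2⟩
    exact hs2 (h ▸ hs1)
  · left
    refine Set.Finite.subset (Set.finite_empty) ?_
    rintro s ⟨hs1, hs2⟩
    exact h (hs2 ▸ hs1 ▸ rfl)

end

end Stmt11
namespace Stmt11

noncomputable section

variable {n : ℕ}

/-- a value not occurring among the coordinates of `s` -/
def fresh (s : Pt n) : Fin (Wsz n) :=
  Classical.choose (show ∃ v : Fin (Wsz n), ∀ j : Fin n, (s.1 j).2 ≠ v by
    have hcard : (Finset.univ.image (fun j : Fin n => (s.1 j).2)).card <
        (Finset.univ : Finset (Fin (Wsz n))).card := by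
      calc (Finset.univ.image (fun j : Fin n => (s.1 j).2)).card
          ≤ (Finset.univ : Finset (Fin n)).card := Finset.card_image_le
        _ = n := by simp
        _ < Wsz n := n_lt_Wsz n
        _ = (Finset.univ : Finset (Fin (Wsz n))).card := by simp
    obtain ⟨v, _, hv⟩ := Finset.not_subset.mp (fun hsub => absurd (Finset.card_le_card hsub)
      (not_le.mpr hcard))
    exact ⟨v, fun j hj => hv (Finset.mem_image.mpr ⟨j, Finset.mem_univ j, hj⟩)⟩)

lemma fresh_spec (s : Pt n) (j : Fin n) : (s.1 j).2 ≠ fresh s :=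
  Classical.choose_spec (p := fun v => ∀ j : Fin n, (s.1 j).2 ≠ v) _ j

/-- the mate of `s` across coordinate `i`, imitating the prototype `t₀` -/
def mate (i : Fin n) (t₀ s : Pt n) : Pt n :=
  if h : ∃ l, l ≠ i ∧ t₀.1 l = t₀.1 i then
    upd s i ((s.1 (Classical.choose h)).2)
  else upd s i (fresh s)

lemma mate_lineEq (i : Fin n) (t₀ s : Pt n) : lineEq i (mate i t₀ s) s := by
  unfold mate
  split <;> exact lineEq_upd s i _

lemma upd_at (s : Pt n) (i : Fin n) (v : Fin (Wsz n)) (l : Fin n) (hl : l ≠ i)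
    (hv : v = (s.1 l).2) : (upd s i v).1 i = s.1 l := by
  rw [upd_apply_self, hv]
  exact Prod.ext (s.2 i l) rfl

/-- kernel transport: the mate of `s` has the same kernel as the prototype. -/
lemma mate_repF (hn : 2 < n) (i : Fin n) {t₀ s₀ s : Pt n} (hline : lineEq i t₀ s₀)
    (hker : repF s = repF s₀) : repF (mate i t₀ s) = repF t₀ := by
  apply repF_congr
  have hoff : ∀ k, k ≠ i → (mate i t₀ s).1 k = s.1 k := fun k hk => mate_lineEq i t₀ s k hk
  have hkers : ∀ k l, k ≠ i → l ≠ i → (s.1 k = s.1 l ↔ t₀.1 k = t₀.1 l) := by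
    intro k l hk hl
    rw [kernel_eq_of_repF hker k l, hline k hk, hline l hl]
  -- the value at i
  have hmatel : ∀ l, l ≠ i → ((mate i t₀ s).1 i = (mate i t₀ s).1 l ↔ t₀.1 i = t₀.1 l) := by
    intro l hl
    rw [hoff l hl]
    unfold mate
    split
    · next h =>
      obtain ⟨hl₀i, hl₀⟩ := Classical.choose_spec h
      set l₀ := Classical.choose h
      rw [upd_at s i _ l₀ hl₀i rfl]
      constructor
      · intro hsl
        have : t₀.1 l₀ = t₀.1 l := by
          rw [← hkers l₀ l hl₀i hl]; exact hsl
        rw [← hl₀]; exact this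
      · intro ht
        have : t₀.1 l₀ = t₀.1 l := by rw [hl₀]; exact ht
        rw [hkers l₀ l hl₀i hl]; exact this
    · next h =>
      push_neg at h
      constructor
      · intro hcon
        exfalso
        have : ((upd s i (fresh s)).1 i).2 = (s.1 l).2 := by rw [hcon]
        rw [upd_apply_self] at this
        exact fresh_spec s l this.symm
      · intro hcon
        exact absurd hcon.symm (h l hl)
  intro k l
  by_cases hk : k = i <;> by_cases hl : l = i
  · subst hk; subst hl; simp
  · subst hk
    exact hmatel l hl
  · subst hl
    constructor
    · intro h'; exact ((hmatel k hk).mp h'.symm).symm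
    · intro h'; exact ((hmatel k hk).mpr h'.symm).symm
  · rw [hoff k hk, hoff l hl]
    exact hkers k l hk hl

/-- the algebra is closed under cylindrifications -/
lemma copS_mem_Ac (hn : 2 < n) {i : Fin n} {X : Set (Pt n)} (hX : X ∈ Ac n) :
    copS i X ∈ Ac n := by
  intro κ
  by_cases hA : ∃ t₀ ∈ X, ∃ s₀, s₀ ∈ Rg n κ ∧ lineEq i t₀ s₀ ∧ (Rg n (repF t₀) \ X).Finite
  · right
    obtain ⟨t₀, ht₀X, s₀, hs₀, hline, hcofin⟩ := hA
    have hsub : Rg n κ \ copS i X ⊆ copS i (Rg n (repF t₀) \ X) := by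
      rintro s ⟨hsκ, hsns⟩
      refine ⟨mate i t₀ s, ⟨?_, ?_⟩, mate_lineEq i t₀ s⟩
      · exact mate_repF hn i hline (hsκ.trans hs₀.symm)
      · intro hmem
        exact hsns ⟨mate i t₀ s, hmem, mate_lineEq i t₀ s⟩
    exact (copS_finite hn hcofin).subset hsub
  · left
    push_neg at hA
    classical
    have hsub : copS i X ∩ Rg n κ ⊆ ⋃ κ' : Fin n → Fin n,
        copS i (if (X ∩ Rg n κ').Finite then X ∩ Rg n κ' else ∅) := by
      rintro s ⟨⟨t, htX, htl⟩, hsκ⟩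
      have hfin : (X ∩ Rg n (repF t)).Finite := by
        have hnotcof := hA t htX s hsκ htl
        rcases hX (repF t) with h | h
        · exact h
        · exact absurd h hnotcof
      refine Set.mem_iUnion.mpr ⟨repF t, ?_⟩
      rw [if_pos hfin]
      exact ⟨t, ⟨htX, rfl⟩, htl⟩
    refine Set.Finite.subset ?_ hsub
    apply Set.finite_iUnion
    intro κ'
    split
    · next h => exact copS_finite hn h
    · exact copS_finite hn Set.finite_empty

end

end Stmt11
namespace Stmt11

noncomputable section

variable (n : ℕ)

/-- the carrier of the algebra -/
def Car := {X : Set (Pt n) // X ∈ Ac n}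

variable {n}

namespace Car

instance : LE (Car n) := ⟨fun X Y => X.1 ≤ Y.1⟩
instance : LT (Car n) := ⟨fun X Y => X.1 < Y.1⟩
instance : Max (Car n) := ⟨fun X Y => ⟨X.1 ∪ Y.1, union_mem_Ac X.2 Y.2⟩⟩
instance : Min (Car n) := ⟨fun X Y => ⟨X.1 ∩ Y.1, inter_mem_Ac X.2 Y.2⟩⟩
instance : Top (Car n) := ⟨⟨Set.univ, top_mem_Ac⟩⟩
instance : Bot (Car n) := ⟨⟨∅, bot_mem_Ac⟩⟩
instance : Compl (Car n) := ⟨fun X => ⟨X.1ᶜ, compl_mem_Ac X.2⟩⟩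
instance : SDiff (Car n) := ⟨fun X Y => ⟨X.1 \ Y.1, by
  rw [Set.diff_eq]; exact inter_mem_Ac X.2 (compl_mem_Ac Y.2)⟩⟩
instance : HImp (Car n) := ⟨fun X Y => ⟨X.1 ⇨ Y.1, by
  rw [himp_eq]; exact union_mem_Ac Y.2 (compl_mem_Ac X.2)⟩⟩

instance : BooleanAlgebra (Car n) :=
  Function.Injective.booleanAlgebra (Subtype.val) Subtype.val_injective
    Iff.rfl Iff.rfl (fun _ _ => rfl) (fun _ _ => rfl) rfl rfl (fun _ => rfl) (fun _ _ => rfl)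
    (fun _ _ => rfl)

lemma le_iff {X Y : Car n} : X ≤ Y ↔ X.1 ⊆ Y.1 := Iff.rfl

@[simp] lemma val_sup (X Y : Car n) : (X ⊔ Y).1 = X.1 ∪ Y.1 := rfl
@[simp] lemma val_inf (X Y : Car n) : (X ⊓ Y).1 = X.1 ∩ Y.1 := rfl
@[simp] lemma val_top : (⊤ : Car n).1 = Set.univ := rfl
@[simp] lemma val_bot : (⊥ : Car n).1 = ∅ := rfl
@[simp] lemma val_compl (X : Car n) : (Xᶜ).1 = X.1ᶜ := rfl

end Car

variable (n) in
/-- the cylindric structure on the carrier -/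
def cstr (hn : 2 < n) : CylStruct (Fin n) (Car n) where
  c := fun i X => ⟨copS i X.1, copS_mem_Ac hn X.2⟩
  d := fun i j => ⟨dS i j, dS_mem_Ac i j⟩
  c_bot := by
    intro i
    apply Subtype.ext
    show copS i ∅ = ∅
    ext s
    simp [copS]
  le_c := by
    intro i X s hs
    exact ⟨s, hs, lineEq_refl i s⟩
  c_inf_c := by
    intro i X Y
    apply Subtype.ext
    show copS i (X.1 ∩ copS i Y.1) = copS i X.1 ∩ copS i Y.1
    ext s
    constructor
    · rintro ⟨t, ⟨htX, u, huY, hul⟩, htl⟩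
      exact ⟨⟨t, htX, htl⟩, ⟨u, huY, lineEq_trans hul htl⟩⟩
    · rintro ⟨⟨t, htX, htl⟩, ⟨u, huY, hul⟩⟩
      exact ⟨t, ⟨htX, u, huY, lineEq_trans hul (lineEq_symm htl)⟩, htl⟩
  c_comm := by
    have main : ∀ (i j : Fin n) (Z : Set (Pt n)), copS i (copS j Z) ⊆ copS j (copS i Z) := by
      rintro i j Z s ⟨t, ⟨u, huZ, hut⟩, hts⟩
      refine ⟨upd s j ((u.1 j).2), ⟨u, huZ, ?_⟩, lineEq_upd s j _⟩
      intro k hk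
      by_cases hkj : k = j
      · subst hkj
        rw [upd_apply_self]
        refine Prod.ext ?_ rfl
        calc (u.1 k).1 = (t.1 k).1 := lineEq_square hn hut k
          _ = (s.1 k).1 := lineEq_square hn hts k
      · rw [upd_apply_ne s j _ hkj, ← hts k hk, hut k hkj]
    intro i j X
    apply Subtype.ext
    exact Set.Subset.antisymm (main i j X.1) (main j i X.1)
  d_diag := by
    intro i
    apply Subtype.ext
    show dS i i = Set.univ
    ext s
    simp [dS]
  d_exch := by
    intro i j k hki hkj
    apply Subtype.ext
    show dS i j = copS k (dS i k ∩ dS k j)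
    ext s
    constructor
    · intro hs
      refine ⟨upd s k ((s.1 i).2), ⟨?_, ?_⟩, lineEq_upd s k _⟩
      · show (upd s k _).1 i = (upd s k _).1 k
        rw [upd_apply_ne s k _ (Ne.symm hki), upd_at s k _ i (Ne.symm hki) rfl]
      · show (upd s k _).1 k = (upd s k _).1 j
        rw [upd_apply_ne s k _ (Ne.symm hkj), upd_at s k _ i (Ne.symm hki) rfl]
        exact hs
    · rintro ⟨t, ⟨hti, htj⟩, hts⟩
      show s.1 i = s.1 j
      have h1 : t.1 i = s.1 i := hts i (Ne.symm hki)
      have h2 : t.1 j = s.1 j := hts j (Ne.symm hkj)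
      rw [← h1, ← h2]
      exact hti.trans htj
  d_cell := by
    intro i j X hij
    apply Subtype.ext
    show copS i (dS i j ∩ X.1) ∩ copS i (dS i j ∩ X.1ᶜ) = ∅
    ext s
    simp only [Set.mem_inter_iff, Set.mem_empty_iff_false, iff_false, not_and]
    rintro ⟨t, ⟨htd, htX⟩, hts⟩ ⟨t', ⟨ht'd, ht'X⟩, ht's⟩
    have hji : j ≠ i := Ne.symm hij
    have htt' : t = t' := by
      apply Subtype.ext
      funext k
      by_cases hk : k = i
      · subst hk
        show t.1 k = t'.1 k
        rw [htd, ht'd, hts j hji, ht's j hji]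
      · rw [hts k hk, ht's k hk]
    rw [htt'] at htX
    exact ht'X htX

end

end Stmt11
namespace Stmt11

noncomputable section

variable {n : ℕ}

/-- the singleton atom at a point -/
def atomE (s : Pt n) : Car n := ⟨{s}, finite_mem_Ac (Set.finite_singleton s)⟩

lemma atomE_ne_bot (s : Pt n) : atomE s ≠ ⊥ := by
  intro h
  have := congrArg Subtype.val h
  simp only [atomE, Car.val_bot] at this
  exact (Set.singleton_ne_empty s) this

lemma isAtom_atomE (s : Pt n) : IsAtom (atomE s) := by
  constructor
  · exact atomE_ne_bot s
  · intro b hb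
    apply Subtype.ext
    have hsub : b.1 ⊆ {s} := hb.le
    have hne : b.1 ≠ {s} := fun h => hb.ne (Subtype.ext h)
    simpa using (Set.subset_singleton_iff_eq.mp hsub).resolve_right hne

lemma atom_eq_atomE {X : Car n} (hX : IsAtom X) : ∃ s : Pt n, X = atomE s := by
  have hne : X.1 ≠ ∅ := by
    intro h
    exact hX.1 (Subtype.ext h)
  obtain ⟨s, hs⟩ := Set.nonempty_iff_ne_empty.mpr hne
  refine ⟨s, ?_⟩
  have hle : atomE s ≤ X := Set.singleton_subset_iff.mpr hs
  rcases hle.lt_or_eq with h | h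
  · exact absurd (hX.2 _ h) (atomE_ne_bot s)
  · exact h.symm

lemma isAtomic_Car : IsAtomic (Car n) := by
  constructor
  intro X
  by_cases h : X = ⊥
  · exact Or.inl h
  · right
    have hne : X.1 ≠ ∅ := fun h' => h (Subtype.ext h')
    obtain ⟨s, hs⟩ := Set.nonempty_iff_ne_empty.mpr hne
    exact ⟨atomE s, isAtom_atomE s, Set.singleton_subset_iff.mpr hs⟩

variable (n) in
/-- full set-algebra unit -/
def Vset : Set (Fin n → Uty n) := VP n

variable (n) in
/-- the representation map -/
def repMap : Car n → Set (Fin n → Uty n) := fun X => Subtype.val '' X.1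

lemma isGsUnit_Vset (hn : 2 < n) : IsGsUnit (Vset n) := by
  refine ⟨Set.range (fun m : ℕ => {u : Uty n | u.1 = m}), ?_, ?_, ?_⟩
  · rintro W ⟨m, rfl⟩
    exact ⟨(m, ⟨0, by simp [Wsz]⟩), rfl⟩
  · rintro W ⟨m, rfl⟩ W' ⟨m', rfl⟩ hne
    have hmm : m ≠ m' := fun h => hne (by rw [h])
    rw [Set.disjoint_left]
    rintro u hu hu'
    exact hmm ((hu : u.1 = m).symm.trans hu')
  · ext s
    simp only [Set.mem_iUnion, Set.mem_range, exists_prop, Set.mem_setOf_eq]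
    constructor
    · intro hs
      have hpos : 0 < n := by omega
      refine ⟨{u : Uty n | u.1 = (s ⟨0, hpos⟩).1}, ⟨(s ⟨0, hpos⟩).1, rfl⟩, ?_⟩
      intro i
      exact hs i ⟨0, hpos⟩
    · rintro ⟨W, ⟨m, rfl⟩, hW⟩
      intro i j
      exact (hW i).trans (hW j).symm

lemma isRepOn (hn : 2 < n) : IsRepOn (cstr n hn) (Vset n) (repMap n) := by
  constructor
  · intro X Y h
    apply Subtype.ext
    exact Set.image_injective.mpr Subtype.val_injective h
  · -- map_top
    ext s
    simp only [repMap, Car.val_top, Set.image_univ, Subtype.range_coe_subtype]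
    rfl
  · simp [repMap]
  · intro X Y
    simp [repMap, Set.image_union]
  · intro X
    ext s
    simp only [repMap, Car.val_compl, Set.mem_image, Set.mem_diff]
    constructor
    · rintro ⟨s', hs', rfl⟩
      refine ⟨s'.2, ?_⟩
      rintro ⟨s'', hs'', hval⟩
      rw [Subtype.val_injective hval] at hs''
      exact hs' hs''
    · rintro ⟨hsV, hs⟩
      exact ⟨⟨s, hsV⟩, fun h => hs ⟨⟨s, hsV⟩, h, rfl⟩, rfl⟩
  · intro i X
    ext s
    simp only [repMap, Set.mem_image]
    constructor
    · rintro ⟨s', ⟨t, htX, hline⟩, rfl⟩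
      exact ⟨s'.2, t.1, ⟨t, htX, rfl⟩, fun j hj => hline j hj⟩
    · rintro ⟨hsV, t, ⟨t', ht'X, rfl⟩, hagree⟩
      exact ⟨⟨s, hsV⟩, ⟨t', ht'X, fun j hj => hagree j hj⟩, rfl⟩
  · intro i j
    ext s
    simp only [repMap, Set.mem_image]
    constructor
    · rintro ⟨s', hs', rfl⟩
      exact ⟨s'.2, hs'⟩
    · rintro ⟨hsV, hs⟩
      exact ⟨⟨s, hsV⟩, hs, rfl⟩

lemma representable (hn : 2 < n) : Representable n (cstr n hn) :=
  ⟨Uty n, Vset n, repMap n, isGsUnit_Vset hn, isRepOn hn⟩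

end

end Stmt11
namespace Stmt11

noncomputable section

variable {n : ℕ}

/-- the type of atoms of the algebra -/
abbrev AT (n : ℕ) (hn : 2 < n) := {a : Car n // IsAtom a}

variable (hn : 2 < n)

/-- atoms as elements of the atom type -/
def atomA (s : Pt n) : {a : Car n // IsAtom a} := ⟨atomE s, isAtom_atomE s⟩

lemma atomA_surj (a : {a : Car n // IsAtom a}) : ∃ s, a = atomA s := by
  obtain ⟨s, hs⟩ := atom_eq_atomE a.2
  exact ⟨s, Subtype.ext hs⟩

lemma atomE_inj {s t : Pt n} (h : atomE s = atomE t) : s = t := by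
  have := congrArg Subtype.val h
  simpa [atomE] using this

lemma atomA_inj {s t : Pt n} (h : atomA s = atomA t) : s = t :=
  atomE_inj (congrArg Subtype.val h)

lemma atomE_le_c_iff {s t : Pt n} {i : Fin n} :
    atomE s ≤ (cstr n hn).c i (atomE t) ↔ lineEq i t s := by
  constructor
  · intro h
    have := h (Set.mem_singleton s)
    obtain ⟨t', ht', hline⟩ := this
    rwa [Set.eq_of_mem_singleton ht'] at hline
  · intro h u hu
    rw [Set.eq_of_mem_singleton hu]
    exact ⟨t, rfl, h⟩

lemma atomE_le_d_iff {s : Pt n} {i j : Fin n} :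
    atomE s ≤ (cstr n hn).d i j ↔ s.1 i = s.1 j := by
  constructor
  · intro h
    exact h (Set.mem_singleton s)
  · intro h u hu
    rw [Set.eq_of_mem_singleton hu]
    exact h

lemma mem_cmC_iff {S : Set {a : Car n // IsAtom a}} {i : Fin n} {s : Pt n} :
    atomA s ∈ cmC (cstr n hn) i S ↔ ∃ t, atomA t ∈ S ∧ lineEq i t s := by
  constructor
  · rintro ⟨b, hbS, hble⟩
    obtain ⟨t, rfl⟩ := atomA_surj b
    exact ⟨t, hbS, (atomE_le_c_iff hn).mp hble⟩
  · rintro ⟨t, htS, hline⟩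
    exact ⟨atomA t, htS, (atomE_le_c_iff hn).mpr hline⟩

lemma mem_cmD_iff {i j : Fin n} {s : Pt n} :
    atomA s ∈ cmD (cstr n hn) i j ↔ s.1 i = s.1 j := atomE_le_d_iff hn

variable (n) in
/-- the complex algebra structure over the atoms -/
def cmStr : CylStruct (Fin n) (Set {a : Car n // IsAtom a}) where
  c := cmC (cstr n hn)
  d := cmD (cstr n hn)
  c_bot := by
    intro i
    ext a
    simp [cmC]
  le_c := by
    intro i S a ha
    exact ⟨a, ha, (cstr n hn).le_c i a.1 ⟩
  c_inf_c := by
    intro i X Y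
    ext a
    obtain ⟨s, rfl⟩ := atomA_surj a
    constructor
    · intro h
      obtain ⟨t, htm, hline⟩ := (mem_cmC_iff hn).mp h
      have htX : atomA t ∈ X := htm.1
      obtain ⟨u, huY, hul⟩ := (mem_cmC_iff hn).mp htm.2
      exact ⟨(mem_cmC_iff hn).mpr ⟨t, htX, hline⟩,
             (mem_cmC_iff hn).mpr ⟨u, huY, lineEq_trans hul hline⟩⟩
    · rintro ⟨h1, h2⟩
      obtain ⟨t, htX, htl⟩ := (mem_cmC_iff hn).mp h1
      obtain ⟨u, huY, hul⟩ := (mem_cmC_iff hn).mp h2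
      exact (mem_cmC_iff hn).mpr ⟨t, ⟨htX, (mem_cmC_iff hn).mpr
        ⟨u, huY, lineEq_trans hul (lineEq_symm htl)⟩⟩, htl⟩
  c_comm := by
    have main : ∀ (i j : Fin n) (Z : Set {a : Car n // IsAtom a}),
        cmC (cstr n hn) i (cmC (cstr n hn) j Z) ⊆ cmC (cstr n hn) j (cmC (cstr n hn) i Z) := by
      intro i j Z a ha
      obtain ⟨s, rfl⟩ := atomA_surj a
      rw [mem_cmC_iff hn] at ha
      obtain ⟨t, htc, hts⟩ := ha
      rw [mem_cmC_iff hn] at htc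
      obtain ⟨u, huZ, hut⟩ := htc
      rw [mem_cmC_iff hn]
      refine ⟨upd s j ((u.1 j).2), ?_, lineEq_upd s j _⟩
      rw [mem_cmC_iff hn]
      refine ⟨u, huZ, ?_⟩
      intro k hk
      by_cases hkj : k = j
      · subst hkj
        rw [upd_apply_self]
        refine Prod.ext ?_ rfl
        calc (u.1 k).1 = (t.1 k).1 := lineEq_square hn hut k
          _ = (s.1 k).1 := lineEq_square hn hts k
      · rw [upd_apply_ne s j _ hkj, ← hts k hk, hut k hkj]
    intro i j X
    exact Set.Subset.antisymm (main i j X) (main j i X)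
  d_diag := by
    intro i
    ext a
    obtain ⟨s, rfl⟩ := atomA_surj a
    simp only [Set.top_eq_univ, Set.mem_univ, iff_true]
    rw [mem_cmD_iff hn]
  d_exch := by
    intro i j k hki hkj
    ext a
    obtain ⟨s, rfl⟩ := atomA_surj a
    rw [mem_cmD_iff hn, mem_cmC_iff hn]
    constructor
    · intro hs
      refine ⟨upd s k ((s.1 i).2), ?_, lineEq_upd s k _⟩
      simp only [Set.inf_eq_inter, Set.mem_inter_iff]
      rw [mem_cmD_iff hn, mem_cmD_iff hn]
      constructor
      · rw [upd_apply_ne s k _ (Ne.symm hki), upd_at s k _ i (Ne.symm hki) rfl]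
      · rw [upd_apply_ne s k _ (Ne.symm hkj), upd_at s k _ i (Ne.symm hki) rfl]
        exact hs
    · rintro ⟨t, htd, hts⟩
      have h1 : atomA t ∈ cmD (cstr n hn) i k := htd.1
      have h2 : atomA t ∈ cmD (cstr n hn) k j := htd.2
      rw [mem_cmD_iff hn] at h1 h2
      have hi : t.1 i = s.1 i := hts i (Ne.symm hki)
      have hj : t.1 j = s.1 j := hts j (Ne.symm hkj)
      rw [← hi, ← hj]
      exact h1.trans h2
  d_cell := by
    intro i j X hij
    ext a
    obtain ⟨s, rfl⟩ := atomA_surj a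
    simp only [Set.inf_eq_inter, Set.mem_inter_iff, Set.bot_eq_empty,
      Set.mem_empty_iff_false, iff_false, not_and]
    intro h1 h2
    rw [mem_cmC_iff hn] at h1 h2
    obtain ⟨t, htm, hts⟩ := h1
    obtain ⟨t', ht'm, ht's⟩ := h2
    have htd : atomA t ∈ cmD (cstr n hn) i j := htm.1
    have ht'd : atomA t' ∈ cmD (cstr n hn) i j := ht'm.1
    rw [mem_cmD_iff hn] at htd ht'd
    have hji : j ≠ i := Ne.symm hij
    have htt' : t = t' := by
      apply Subtype.ext
      funext k
      by_cases hk : k = i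
      · subst hk
        show t.1 k = t'.1 k
        rw [htd, ht'd, hts j hji, ht's j hji]
      · rw [hts k hk, ht's k hk]
    have hX : atomA t ∈ X := htm.2
    rw [htt'] at hX
    exact ht'm.2 hX

end

end Stmt11
namespace Stmt11

noncomputable section

variable {n : ℕ}

/-! ### ultrafilter classification for the concrete algebra -/

/-- an ultrafilter is slim if it contains no element with finite underlying set -/
def Slim (G : Set (Car n)) : Prop := ∀ x : Car n, x.1.Finite → x ∉ G

/-- region elements of the algebra -/
def RgE (κ : Fin n → Fin n) : Car n := ⟨Rg n κ, Rg_mem_Ac κ⟩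

lemma ultra_finsetSup {ι : Type} {F : Set (Car n)} (hF : IsBoolUltrafilter F)
    (s : Finset ι) (g : ι → Car n) (h : s.sup g ∈ F) : ∃ i ∈ s, g i ∈ F := by
  classical
  induction s using Finset.induction_on with
  | empty =>
    rw [Finset.sup_empty] at h
    exact absurd h hF.bot_not_mem
  | @insert i s hi ih =>
    rw [Finset.sup_insert] at h
    rcases hF.prime h with h' | h'
    · exact ⟨i, Finset.mem_insert_self i s, h'⟩
    · obtain ⟨j, hj, hgj⟩ := ih h'
      exact ⟨j, Finset.mem_insert_of_mem hj, hgj⟩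

lemma exists_region_mem {F : Set (Car n)} (hF : IsBoolUltrafilter F) :
    ∃ κ : Fin n → Fin n, RgE κ ∈ F := by
  classical
  have htop : (⊤ : Car n) ≤ (Finset.univ : Finset (Fin n → Fin n)).sup RgE := by
    intro s _
    have hle : RgE (repF s) ≤ (Finset.univ : Finset (Fin n → Fin n)).sup RgE :=
      Finset.le_sup (Finset.mem_univ _)
    exact hle (show s ∈ Rg n (repF s) from rfl)
  have hsup : (Finset.univ : Finset (Fin n → Fin n)).sup RgE ∈ F :=
    hF.up hF.top_mem htop
  obtain ⟨κ, _, hκ⟩ := ultra_finsetSup hF Finset.univ RgE hsup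
  exact ⟨κ, hκ⟩

lemma slim_ultra_eq {G G' : Set (Car n)} (hG : IsBoolUltrafilter G)
    (hG' : IsBoolUltrafilter G') (sG : Slim G) (sG' : Slim G') {κ : Fin n → Fin n}
    (hκ : RgE κ ∈ G) (hκ' : RgE κ ∈ G') : G = G' := by
  have main : ∀ {H H' : Set (Car n)}, IsBoolUltrafilter H → IsBoolUltrafilter H' →
      Slim H → Slim H' → RgE κ ∈ H → RgE κ ∈ H' → ∀ x ∈ H, x ∈ H' := by
    intro H H' hH hH' sH sH' hκH hκH' x hx
    have hcof : (Rg n κ \ x.1).Finite := by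
      rcases x.2 κ with hfin | hcof
      · exfalso
        have hw : x ⊓ RgE κ ∈ H := hH.inf_mem hx hκH
        exact sH (x ⊓ RgE κ) hfin hw
      · exact hcof
    set w : Car n := ⟨Rg n κ \ x.1, finite_mem_Ac hcof⟩ with hw
    have hle : RgE κ ≤ x ⊔ w := by
      intro s hs
      by_cases hsx : s ∈ x.1
      · exact Or.inl hsx
      · exact Or.inr ⟨hs, hsx⟩
    have hsup : x ⊔ w ∈ H' := hH'.up hκH' hle
    rcases hH'.prime hsup with h | h
    · exact h
    · exact absurd h (sH' w hcof)
  apply Set.eq_of_subset_of_subset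
  · exact fun x hx => main hG hG' sG sG' hκ hκ' x hx
  · exact fun x hx => main hG' hG sG' sG hκ' hκ x hx

/-! ### the nonprincipal ultrafilter over the distinct region -/

/-- witness points in the all-distinct region -/
def distPt (hn : 2 < n) (m : ℕ) : Pt n :=
  ⟨fun i => (m, ⟨i.1, lt_trans i.2 (n_lt_Wsz n)⟩), fun _ _ => rfl⟩

lemma repF_distPt (hn : 2 < n) (m : ℕ) : repF (distPt hn m) = fun i => i := by
  funext i
  have hinj : ∀ j k : Fin n, (distPt hn m).1 j = (distPt hn m).1 k → j = k := by
    intro j k h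
    have := congrArg (fun u : Uty n => (u.2 : ℕ)) h
    simpa [distPt, Fin.ext_iff] using this
  unfold repF
  apply le_antisymm
  · apply Finset.min'_le
    simp
  · apply Finset.le_min'
    intro y hy
    simp only [Finset.mem_filter, Finset.mem_univ, true_and] at hy
    rw [hinj y i hy]

lemma Rg_id_infinite (hn : 2 < n) : (Rg n (fun i => i)).Infinite := by
  apply Set.infinite_of_injective_forall_mem (f := distPt hn)
  case hi =>
    intro m m' h
    have := congrArg (fun s : Pt n => (s.1 ⟨0, by omega⟩).1) h
    simpa [distPt] using this
  case hf =>
    intro m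
    exact repF_distPt hn m

variable (n) in
/-- the distinguished nonprincipal ultrafilter -/
def zUF (hn : 2 < n) : Set (Car n) := {x | (Rg n (fun i => i) \ x.1).Finite}

lemma zUF_ultra (hn : 2 < n) : IsBoolUltrafilter (zUF n hn) := by
  refine ⟨?_, ?_, ?_, ?_, ?_⟩
  · show (Rg n _ \ Set.univ).Finite
    simp
  · show ¬ (Rg n _ \ ∅).Finite
    simpa using Rg_id_infinite hn
  · intro x hx y hy
    show (Rg n _ \ (x.1 ∩ y.1)).Finite
    refine (hx.union hy).subset ?_
    intro s ⟨hs1, hs2⟩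
    by_cases h : s ∈ x.1
    · exact Or.inr ⟨hs1, fun hy' => hs2 ⟨h, hy'⟩⟩
    · exact Or.inl ⟨hs1, h⟩
  · intro x hx y hxy
    exact hx.subset (fun s ⟨hs1, hs2⟩ => ⟨hs1, fun h => hs2 (hxy h)⟩)
  · intro x
    rcases x.2 (fun i => i) with hfin | hcof
    · right
      show (Rg n _ \ x.1ᶜ).Finite
      refine hfin.subset ?_
      intro s ⟨hs1, hs2⟩
      exact ⟨Set.not_notMem.mp hs2, hs1⟩
    · exact Or.inl hcof

lemma zUF_slim (hn : 2 < n) : Slim (zUF n hn) := by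
  intro x hx hmem
  have : (Rg n (fun i => i)).Finite := by
    have := (hmem : (Rg n (fun i => i) \ x.1).Finite).union hx
    refine this.subset ?_
    intro s hs
    by_cases h : s ∈ x.1
    · exact Or.inr h
    · exact Or.inl ⟨hs, h⟩
  exact Rg_id_infinite hn this

end

end Stmt11
namespace Stmt11

noncomputable section

variable {n : ℕ}

/-! ### transversals -/

/-- pick the `t`-th natural number avoiding `a` and `c` -/
def pickN (a c t : ℕ) : ℕ :=
  let v1 := if min a c ≤ t then t + 1 else t
  if max a c ≤ v1 then v1 + 1 else v1

lemma pickN_ne (a c t : ℕ) : pickN a c t ≠ a ∧ pickN a c t ≠ c := by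
  unfold pickN
  simp only
  split_ifs <;> omega

lemma pickN_strictMono (a c : ℕ) {t t' : ℕ} (h : t < t') : pickN a c t < pickN a c t' := by
  unfold pickN
  simp only
  split_ifs <;> omega

lemma pickN_le (a c t : ℕ) : pickN a c t ≤ t + 2 := by
  unfold pickN
  simp only
  split_ifs <;> omega

/-- pick in `Fin (Wsz n)` -/
def pickF (a c : Fin (Wsz n)) (t : Fin (qq n)) : Fin (Wsz n) :=
  ⟨pickN a.1 c.1 t.1, by
    have h1 := pickN_le a.1 c.1 t.1
    have h2 := t.2
    simp only [Wsz] at *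
    omega⟩

lemma pickF_inj {a c : Fin (Wsz n)} {t t' : Fin (qq n)} (h : pickF a c t = pickF a c t') :
    t = t' := by
  by_contra hne
  rcases Nat.lt_or_ge t.1 t'.1 with hlt | hge
  · exact absurd (congrArg Fin.val h) (Nat.ne_of_lt (pickN_strictMono a.1 c.1 hlt))
  · have : t'.1 < t.1 := by
      rcases Nat.lt_or_ge t'.1 t.1 with h' | h'
      · exact h'
      · exact absurd (Fin.ext (le_antisymm h' hge)) hne
    exact absurd (congrArg Fin.val h).symm (Nat.ne_of_lt (pickN_strictMono a.1 c.1 this))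

/-- index 0,1,2 -/
def ix0 (hn : 2 < n) : Fin n := ⟨0, by omega⟩
def ix1 (hn : 2 < n) : Fin n := ⟨1, by omega⟩
def ix2 (hn : 2 < n) : Fin n := ⟨2, by omega⟩

lemma ix01 (hn : 2 < n) : ix0 hn ≠ ix1 hn := by simp [ix0, ix1, Fin.ext_iff]
lemma ix21 (hn : 2 < n) : ix2 hn ≠ ix1 hn := by simp [ix2, ix1, Fin.ext_iff]
lemma ix20 (hn : 2 < n) : ix2 hn ≠ ix0 hn := by simp [ix2, ix0, Fin.ext_iff]

/-- the saturated set: atoms whose coordinates 0 and 2 differ -/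
def Uhat (hn : 2 < n) : Set {a : Car n // IsAtom a} :=
  {a | ∃ s : Pt n, a = atomA s ∧ s.1 (ix0 hn) ≠ s.1 (ix2 hn)}

/-- the transversal sets -/
def Tv (hn : 2 < n) (t : Fin (qq n)) : Set {a : Car n // IsAtom a} :=
  {a | ∃ s : Pt n, a = atomA s ∧ s.1 (ix0 hn) ≠ s.1 (ix2 hn) ∧
    (s.1 (ix1 hn)).2 = pickF (s.1 (ix0 hn)).2 (s.1 (ix2 hn)).2 t}

lemma Tv_disjoint (hn : 2 < n) {t t' : Fin (qq n)} (h : t ≠ t') : Tv hn t ∩ Tv hn t' = ∅ := by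
  ext a
  simp only [Set.mem_inter_iff, Set.mem_empty_iff_false, iff_false, not_and]
  rintro ⟨s, rfl, _, hp⟩ ⟨s', hss', _, hp'⟩
  have hs : s = s' := atomA_inj hss'
  subst hs
  rw [hp] at hp'
  exact h (pickF_inj hp'.symm).symm

lemma Tv_subset_Uhat (hn : 2 < n) (t : Fin (qq n)) : Tv hn t ⊆ Uhat hn := by
  rintro a ⟨s, rfl, hne, _⟩
  exact ⟨s, rfl, hne⟩

lemma cmC_Tv (hn : 2 < n) (t : Fin (qq n)) : cmC (cstr n hn) (ix1 hn) (Tv hn t) = Uhat hn := by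
  ext a
  obtain ⟨s, rfl⟩ := atomA_surj a
  rw [mem_cmC_iff hn]
  constructor
  · rintro ⟨u, ⟨u', hu', hne, _⟩, hline⟩
    have : u = u' := atomA_inj hu'
    subst this
    refine ⟨s, rfl, ?_⟩
    rw [← hline _ (ix01 hn), ← hline _ (ix21 hn)]
    exact hne
  · rintro ⟨s', hs', hne⟩
    have : s = s' := atomA_inj hs'
    subst this
    set v := pickF (s.1 (ix0 hn)).2 (s.1 (ix2 hn)).2 t with hv
    refine ⟨upd s (ix1 hn) v, ⟨upd s (ix1 hn) v, rfl, ?_, ?_⟩, lineEq_upd s _ _⟩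
    · rw [upd_apply_ne s _ _ (ix01 hn), upd_apply_ne s _ _ (ix21 hn)]
      exact hne
    · rw [upd_apply_ne s _ _ (ix01 hn), upd_apply_ne s _ _ (ix21 hn), upd_apply_self]

lemma cmC_Uhat (hn : 2 < n) : cmC (cstr n hn) (ix0 hn) (Uhat hn) = Set.univ := by
  ext a
  simp only [Set.mem_univ, iff_true]
  obtain ⟨s, rfl⟩ := atomA_surj a
  rw [mem_cmC_iff hn]
  -- choose a value different from coordinate 2's value
  have h2 : (1 : ℕ) < Wsz n := by simp only [Wsz]; omega
  set w : Fin (Wsz n) := if (s.1 (ix2 hn)).2.1 = 0 then ⟨1, h2⟩ else ⟨0, by omega⟩ with hw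
  have hwne : w ≠ (s.1 (ix2 hn)).2 := by
    rw [hw]
    split
    · next h => intro hcon; rw [← hcon] at h; simp at h
    · next h => intro hcon; exact h (by rw [← hcon])
  refine ⟨upd s (ix0 hn) w, ⟨upd s (ix0 hn) w, rfl, ?_⟩, lineEq_upd s _ _⟩
  rw [upd_apply_self, upd_apply_ne s _ _ (ix20 hn)]
  intro hcon
  exact hwne (congrArg Prod.snd hcon)

end

end Stmt11
namespace Stmt11

lemma no_hom {n : ℕ} (hn : 2 < n) :
    ¬ ∃ f : Set {a : Car n // IsAtom a} → Set {F : Set (Car n) // IsBoolUltrafilter F},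
      IsCylHom (cmStr n hn) (canStr (cstr n hn)) f ∧ Function.Injective f := by
  rintro ⟨f, hf, -⟩
  have hmapc : ∀ (i : Fin n) (S : Set {a : Car n // IsAtom a}),
      f (cmC (cstr n hn) i S) = canC (cstr n hn) i (f S) := fun i S => hf.map_c i S
  -- f of the saturated element is everything
  have hcan0 : canC (cstr n hn) (ix0 hn) (f (Uhat hn)) = Set.univ := by
    rw [← hmapc (ix0 hn) (Uhat hn), cmC_Uhat hn]
    have := hf.bool.map_top
    rw [Set.top_eq_univ, Set.top_eq_univ] at this
    exact this
  -- the distinguished nonprincipal ultrafilter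
  have hzmem : (⟨zUF n hn, zUF_ultra hn⟩ : {F : Set (Car n) // IsBoolUltrafilter F}) ∈
      canC (cstr n hn) (ix0 hn) (f (Uhat hn)) := by
    rw [hcan0]; trivial
  obtain ⟨G, hGU, hGz⟩ := hzmem
  have hGslim : Slim G.1 := by
    intro x hx hxG
    have h1 := hGz x hxG
    exact zUF_slim hn _ (copS_finite hn hx) h1
  -- for each transversal, a slim ultrafilter in its image
  have hstep : ∀ t : Fin (qq n), ∃ Gt : {F : Set (Car n) // IsBoolUltrafilter F},
      Gt ∈ f (Tv hn t) ∧ Slim Gt.1 := by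
    intro t
    have hUt : f (Uhat hn) = canC (cstr n hn) (ix1 hn) (f (Tv hn t)) := by
      conv_lhs => rw [← cmC_Tv hn t]
      exact hmapc _ _
    rw [hUt] at hGU
    obtain ⟨Gt, hGtmem, hGtrel⟩ := hGU
    refine ⟨Gt, hGtmem, ?_⟩
    intro x hx hxGt
    exact hGslim _ (copS_finite hn hx) (hGtrel x hxGt)
  choose Gt hGtmem hGtslim using hstep
  have hreg : ∀ t, ∃ κ : Fin n → Fin n, RgE κ ∈ (Gt t).1 :=
    fun t => exists_region_mem (Gt t).2
  choose κf hκf using hreg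
  have hinj : Function.Injective κf := by
    intro t t' h
    by_contra hne
    have hGG : (Gt t).1 = (Gt t').1 :=
      slim_ultra_eq (Gt t).2 (Gt t').2 (hGtslim t) (hGtslim t') (hκf t) (h ▸ hκf t')
    have heq : Gt t = Gt t' := Subtype.ext hGG
    have hbot : Tv hn t ⊓ Tv hn t' = (⊥ : Set {a : Car n // IsAtom a}) := by
      exact Tv_disjoint hn hne
    have hd : f (Tv hn t) ⊓ f (Tv hn t') = (⊥ : Set _) := by
      rw [← hf.bool.map_inf, hbot, hf.bool.map_bot]
    have h1 := hGtmem t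
    rw [heq] at h1
    have : Gt t' ∈ f (Tv hn t) ⊓ f (Tv hn t') := ⟨h1, hGtmem t'⟩
    rw [hd] at this
    exact this
  have hcard := Fintype.card_le_of_injective κf hinj
  rw [Fintype.card_fin, Fintype.card_fun, Fintype.card_fin] at hcard
  simp only [qq] at hcard
  omega

end Stmt11


/-- Let `2 < n < ω`.  There exists an atomic `A ∈ RCA_n` such that
there is no injective `CA_n`-homomorphism from the complex algebra `Cm At A` (the
Dedekind–MacNeille completion of the subalgebra generated by the atoms) into the
canonical extension `A⁺` of `A`. -/
theorem complex_algebra_not_embeddable_in_canonical_extension (n : ℕ) (hn : 2 < n) :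
    ∃ A : CAlg (Fin n),
      IsAtomic A.carrier ∧ Representable n A.str ∧
      ∃ cCm : CylStruct (Fin n) (Set {a : A.carrier // IsAtom a}),
        IsComplexAlgebraOf A.str cCm ∧
        ∃ cP : CylStruct (Fin n) (Set {F : Set A.carrier // IsBoolUltrafilter F}),
          IsCanonicalExtOf A.str cP ∧
          ¬ ∃ f : Set {a : A.carrier // IsAtom a} →
              Set {F : Set A.carrier // IsBoolUltrafilter F},
              IsCylHom cCm cP f ∧ Function.Injective f := by
  refine ⟨⟨Stmt11.Car n, Stmt11.cstr n hn⟩, Stmt11.isAtomic_Car, Stmt11.representable hn,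
    Stmt11.cmStr n hn, ⟨fun _ _ => rfl, fun _ _ => rfl⟩,
    canStr (Stmt11.cstr n hn), canStr_isCanonicalExtOf _, Stmt11.no_hom hn⟩
end

section
/- Let 2 < n < m < ω. If A ∈ CA_n has an m-square representation and h : A → B is a surjective homomorphism of CA_n's, then B has an m-square representation. (Together with closure under subalgebras and products, the class of CA_n's having m-square representations is a variety.) -/
/-- `C` is an `n`-clique for the unit `V`: every `n`-tuple of distinct elements of `C`
lies in `V`. -/
def IsNClique {n : ℕ} {U : Type} (V : Set (Fin n → U)) (C : Set U) : Prop :=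
  ∀ s : Fin n → U, (∀ i, s i ∈ C) → Function.Injective s → s ∈ V

/-- `C^m(M)`: the `m`-tuples whose range is an `n`-clique. -/
def CliqueTuples (n m : ℕ) {U : Type} (V : Set (Fin n → U)) : Set (Fin m → U) :=
  {s | IsNClique V (Set.range s)}

/-- The base of the representation is the union of the ranges of sequences in `V`. -/
def BaseIsUnion {n : ℕ} {U : Type} (V : Set (Fin n → U)) : Prop :=
  ∀ u : U, ∃ s ∈ V, ∃ i, s i = u

/-- The representation `f` of `cA` on the unit `V` is `m`-square. -/
def IsMSquare (n m : ℕ) {A : Type} [BooleanAlgebra A] (cA : CylStruct (Fin n) A)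
    {U : Type} (V : Set (Fin n → U)) (f : A → Set (Fin n → U)) : Prop :=
  ∀ s ∈ CliqueTuples n m V, ∀ (a : A) (i : Fin n) (l : Fin n → Fin m),
    Function.Injective l → (s ∘ l) ∈ f (cA.c i a) →
    ∃ t ∈ CliqueTuples n m V, (∀ j, j ≠ l i → t j = s j) ∧ (t ∘ l) ∈ f a

namespace MSqAux

open Set

variable {n : ℕ} {A : Type} [BooleanAlgebra A] {U : Type}

/-- An `IsRepOn` without the injectivity requirement. -/
structure WeakRep (cA : CylStruct (Fin n) A) (V : Set (Fin n → U))
    (f : A → Set (Fin n → U)) : Prop where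
  map_top : f ⊤ = V
  map_bot : f ⊥ = ∅
  map_sup : ∀ x y, f (x ⊔ y) = f x ∪ f y
  map_compl : ∀ x, f xᶜ = V \ f x
  map_c : ∀ i x, f (cA.c i x) = cylOp V i (f x)
  map_d : ∀ i j, f (cA.d i j) = diagSet V i j

lemma IsRepOn.toWeak {cA : CylStruct (Fin n) A} {V : Set (Fin n → U)}
    {f : A → Set (Fin n → U)} (hrep : IsRepOn cA V f) : WeakRep cA V f :=
  ⟨hrep.map_top, hrep.map_bot, hrep.map_sup, hrep.map_compl, hrep.map_c, hrep.map_d⟩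

variable {cA : CylStruct (Fin n) A} {V : Set (Fin n → U)} {f : A → Set (Fin n → U)}

lemma subset_V (hrep : WeakRep cA V f) (a : A) : f a ⊆ V := by
  have h1 : f a = V \ f aᶜ := by
    have h1 := hrep.map_compl aᶜ; rw [compl_compl] at h1; exact h1
  rw [h1]; exact diff_subset

lemma rep_inf (hrep : WeakRep cA V f) (x y : A) : f (x ⊓ y) = f x ∩ f y := by
  have hx := subset_V hrep x
  have hy := subset_V hrep y
  have e : x ⊓ y = (xᶜ ⊔ yᶜ)ᶜ := by simp
  rw [e, hrep.map_compl, hrep.map_sup, hrep.map_compl, hrep.map_compl]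
  ext s
  constructor
  · rintro ⟨hsV, hns⟩
    simp only [mem_union, mem_diff, not_or, not_and, not_not] at hns
    exact ⟨hns.1 hsV, hns.2 hsV⟩
  · rintro ⟨h1, h2⟩
    refine ⟨hx h1, ?_⟩
    simp only [mem_union, mem_diff, not_or, not_and, not_not]
    exact ⟨fun _ => h1, fun _ => h2⟩

lemma rep_mono (hrep : WeakRep cA V f) {x y : A} (hxy : x ≤ y) : f x ⊆ f y := by
  have : x ⊓ y = x := inf_eq_left.2 hxy
  have h2 := rep_inf hrep x y
  rw [this] at h2
  rw [h2]; exact inter_subset_right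

lemma rep_nonempty (hrep : IsRepOn cA V f) {x : A} (hx : x ≠ ⊥) : (f x).Nonempty := by
  by_contra hne
  rw [Set.not_nonempty_iff_eq_empty] at hne
  exact hx (hrep.inj (by rw [hne, hrep.map_bot]))

/-- duplication closure of the unit. -/
lemma rep_dup (hrep : WeakRep cA V f) {s : Fin n → U} (hs : s ∈ V) {i j : Fin n}
    (hij : i ≠ j) : Function.update s i (s j) ∈ V := by
  have e1 : (⊤ : A) = cA.c i (cA.d j i ⊓ cA.d i j) := by
    have := cA.d_exch j j i hij hij
    rw [← this, cA.d_diag]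
  have e2 : V = cylOp V i (f (cA.d j i) ∩ f (cA.d i j)) := by
    calc V = f ⊤ := hrep.map_top.symm
    _ = f (cA.c i (cA.d j i ⊓ cA.d i j)) := by rw [← e1]
    _ = cylOp V i (f (cA.d j i ⊓ cA.d i j)) := hrep.map_c _ _
    _ = cylOp V i (f (cA.d j i) ∩ f (cA.d i j)) := by rw [rep_inf hrep]
  have hs2 : s ∈ cylOp V i (f (cA.d j i) ∩ f (cA.d i j)) := by rw [← e2]; exact hs
  obtain ⟨hsV, t, ⟨ht1, ht2⟩, hagree⟩ := hs2
  rw [hrep.map_d] at ht1 ht2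
  have htV : t ∈ V := ht1.1
  have hteq : t = Function.update s i (s j) := by
    funext k
    by_cases hk : k = i
    · subst hk
      rw [Function.update_self]
      have : t k = t j := ht2.2
      rw [this, hagree j (Ne.symm hij)]
    · rw [Function.update_of_ne hk, hagree k hk]
  rw [← hteq]; exact htV

end MSqAux
namespace MSqAux

open Set Filter

variable {ι U : Type}

def uSetoid (ι U : Type) (D : Ultrafilter ι) : Setoid (ι → U) where
  r g h := {x | g x = h x} ∈ D
  iseqv := by
    refine ⟨fun g => ?_, fun {g h} hg => ?_, fun {g h k} hg hh => ?_⟩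
    · simp only [setOf_true]; exact Filter.univ_mem
    · exact Filter.mem_of_superset hg (fun x hx => (hx : g x = h x).symm)
    · exact Filter.mem_of_superset (Filter.inter_mem hg hh)
        (fun x hx => (hx.1 : g x = h x).trans hx.2)

def UP (ι U : Type) (D : Ultrafilter ι) : Type := Quotient (uSetoid ι U D)

variable {D : Ultrafilter ι}

def umk (D : Ultrafilter ι) (g : ι → U) : UP ι U D := Quotient.mk (uSetoid ι U D) g

noncomputable def uout (u : UP ι U D) : ι → U := Quotient.out u

lemma umk_uout (u : UP ι U D) : umk D (uout u) = u := Quotient.out_eq u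

lemma uout_congr {u v : UP ι U D} (huv : u = v) : uout u = uout v := by rw [huv]

lemma umk_eq_iff {g h : ι → U} : umk D g = umk D h ↔ {x | g x = h x} ∈ D := by
  constructor
  · intro he; exact Quotient.exact he
  · intro he; exact Quotient.sound he

lemma uout_umk_rel (g : ι → U) : {x | uout (umk D g) x = g x} ∈ D :=
  umk_eq_iff.1 (umk_uout (umk D g))

variable {k : ℕ}

/-- evaluate the canonical representatives of a tuple of germs at an index. -/
noncomputable def tupOut (s : Fin k → UP ι U D) (x : ι) : Fin k → U :=
  fun j => uout (s j) x

/-- lift a set of tuples to the ultrapower. -/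
noncomputable def liftSet (D : Ultrafilter ι) (X : Set (Fin k → U)) :
    Set (Fin k → UP ι U D) :=
  {s | {x | tupOut s x ∈ X} ∈ D}

lemma mem_liftSet_iff_reps {X : Set (Fin k → U)} {s : Fin k → UP ι U D}
    {S : Fin k → ι → U} (hS : ∀ j, umk D (S j) = s j) :
    s ∈ liftSet D X ↔ {x | (fun j => S j x) ∈ X} ∈ D := by
  have hE : {x | ∀ j, S j x = uout (s j) x} ∈ D := by
    have h1 : ∀ j : Fin k, {x | S j x = uout (s j) x} ∈ D := by
      intro j
      have := uout_umk_rel (D := D) (S j)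
      have h2 : uout (umk D (S j)) = uout (s j) := uout_congr (by rw [hS j])
      rw [h2] at this
      exact Filter.mem_of_superset this (fun x hx => (hx : _ = _).symm)
    have h3 : (⋂ j : Fin k, {x | S j x = uout (s j) x}) ∈ (D : Filter ι) :=
      Filter.iInter_mem.2 h1
    exact Filter.mem_of_superset h3 (by intro x hx; simp only [mem_iInter] at hx; exact hx)
  constructor
  · intro hs
    refine Filter.mem_of_superset (Filter.inter_mem hs hE) ?_
    rintro x ⟨hx1, hx2⟩
    have : (fun j => S j x) = tupOut s x := funext (fun j => hx2 j)
    simpa [this] using hx1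
  · intro hs
    refine Filter.mem_of_superset (Filter.inter_mem hs hE) ?_
    rintro x ⟨hx1, hx2⟩
    have : (fun j => S j x) = tupOut s x := funext (fun j => hx2 j)
    simpa [← this] using hx1

lemma liftSet_mono {X Y : Set (Fin k → U)} (hXY : X ⊆ Y) :
    liftSet D X ⊆ liftSet D Y := by
  intro s hs
  exact Filter.mem_of_superset hs (fun x hx => hXY hx)

lemma liftSet_empty : liftSet D (∅ : Set (Fin k → U)) = ∅ := by
  ext s
  simp only [liftSet, mem_setOf_eq, mem_empty_iff_false, iff_false]
  intro hs
  have h0 : ({x : ι | False} : Set ι) ∈ (D : Filter ι) := hs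
  simp only [setOf_false] at h0
  exact (Filter.empty_notMem (D : Filter ι)) h0

lemma liftSet_union (X Y : Set (Fin k → U)) :
    liftSet D (X ∪ Y) = liftSet D X ∪ liftSet D Y := by
  ext s
  have he : {x | tupOut s x ∈ X ∪ Y} = {x | tupOut s x ∈ X} ∪ {x | tupOut s x ∈ Y} := rfl
  show {x | tupOut s x ∈ X ∪ Y} ∈ D ↔ _
  rw [he]
  exact (Ultrafilter.union_mem_iff).trans Iff.rfl

lemma liftSet_inter (X Y : Set (Fin k → U)) :
    liftSet D (X ∩ Y) = liftSet D X ∩ liftSet D Y := by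
  ext s
  have he : {x | tupOut s x ∈ X ∩ Y} = {x | tupOut s x ∈ X} ∩ {x | tupOut s x ∈ Y} := rfl
  show {x | tupOut s x ∈ X ∩ Y} ∈ D ↔ _
  rw [he]
  exact Filter.inter_mem_iff

lemma liftSet_diff (V X : Set (Fin k → U)) :
    liftSet D (V \ X) = liftSet D V \ liftSet D X := by
  ext s
  show {x | tupOut s x ∈ V \ X} ∈ D ↔ _
  constructor
  · intro hs
    constructor
    · exact Filter.mem_of_superset hs (fun x hx => hx.1)
    · intro hX
      have h4 : ({x | tupOut s x ∈ V \ X} ∩ {x | tupOut s x ∈ X}) ∈ (D : Filter ι) :=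
        Filter.inter_mem hs hX
      have he : ({x | tupOut s x ∈ V \ X} ∩ {x | tupOut s x ∈ X}) = ∅ := by
        apply eq_empty_iff_forall_notMem.2
        rintro x ⟨⟨_, h2⟩, h3⟩; exact h2 h3
      rw [he] at h4
      exact Filter.empty_notMem (D : Filter ι) h4
  · rintro ⟨hV, hX⟩
    have hXc : {x | tupOut s x ∈ X}ᶜ ∈ D := (Ultrafilter.compl_mem_iff_notMem).2 hX
    refine Filter.mem_of_superset (Filter.inter_mem hV hXc) ?_
    rintro x ⟨h1, h2⟩
    exact ⟨h1, h2⟩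

end MSqAux
namespace MSqAux

open Set Filter

variable {ι U : Type} {D : Ultrafilter ι} {n : ℕ}

lemma lift_cylOp (V : Set (Fin n → U)) (i : Fin n) (X : Set (Fin n → U)) :
    liftSet D (cylOp V i X) = cylOp (liftSet D V) i (liftSet D X) := by
  ext s
  constructor
  · intro hs
    have hsD : {x | tupOut s x ∈ cylOp V i X} ∈ D := hs
    have hsV : s ∈ liftSet D V :=
      Filter.mem_of_superset hsD (fun x hx => hx.1)
    -- choose witnesses
    have hw : ∀ x : ι, ∃ t : Fin n → U,
        tupOut s x ∈ cylOp V i X → (t ∈ X ∧ ∀ j, j ≠ i → t j = tupOut s x j) := by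
      intro x
      by_cases hx : tupOut s x ∈ cylOp V i X
      · obtain ⟨_, t, htX, hagr⟩ := hx
        exact ⟨t, fun _ => ⟨htX, hagr⟩⟩
      · exact ⟨tupOut s x, fun hc => absurd hc hx⟩
    choose w hwspec using hw
    set S : Fin n → ι → U := fun j => if j = i then (fun x => w x i) else uout (s j) with hS
    set t : Fin n → UP ι U D := Function.update s i (umk D (fun x => w x i)) with ht
    have hreps : ∀ j, umk D (S j) = t j := by
      intro j
      by_cases hj : j = i
      · subst hj
        simp only [hS, if_pos rfl, ht, Function.update_self]
      · simp only [hS, if_neg hj, ht, Function.update_of_ne hj, umk_uout]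
    have htX : t ∈ liftSet D X := by
      rw [mem_liftSet_iff_reps hreps]
      refine Filter.mem_of_superset hsD ?_
      intro x hx
      have hx' : tupOut s x ∈ cylOp V i X := hx
      have hsp := hwspec x hx'
      have he : (fun j => S j x) = w x := by
        funext j
        by_cases hj : j = i
        · subst hj; simp [hS]
        · simp only [hS, if_neg hj]
          exact (hsp.2 j hj).symm
      show (fun j => S j x) ∈ X
      rw [he]; exact hsp.1
    refine ⟨hsV, t, htX, ?_⟩
    intro j hj
    simp only [ht, Function.update_of_ne hj]
  · rintro ⟨hsV, t, htX, hagr⟩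
    have hsVD : {x | tupOut s x ∈ V} ∈ D := hsV
    have htXD : {x | tupOut t x ∈ X} ∈ D := htX
    have houts : ∀ j, j ≠ i → uout (t j) = uout (s j) := by
      intro j hj; rw [hagr j hj]
    refine Filter.mem_of_superset (Filter.inter_mem hsVD htXD) ?_
    rintro x ⟨hx1, hx2⟩
    refine ⟨hx1, tupOut t x, hx2, ?_⟩
    intro j hj
    show uout (t j) x = uout (s j) x
    rw [houts j hj]

lemma lift_diagSet (V : Set (Fin n → U)) (i j : Fin n) :
    liftSet D (diagSet V i j) = diagSet (liftSet D V) i j := by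
  ext s
  constructor
  · intro hs
    have hsD : {x | tupOut s x ∈ diagSet V i j} ∈ D := hs
    refine ⟨Filter.mem_of_superset hsD (fun x hx => hx.1), ?_⟩
    have hij : {x | uout (s i) x = uout (s j) x} ∈ D :=
      Filter.mem_of_superset hsD (fun x hx => hx.2)
    calc s i = umk D (uout (s i)) := (umk_uout _).symm
      _ = umk D (uout (s j)) := umk_eq_iff.2 hij
      _ = s j := umk_uout _
  · rintro ⟨hsV, hij⟩
    have hsVD : {x | tupOut s x ∈ V} ∈ D := hsV
    refine Filter.mem_of_superset hsVD ?_
    intro x hx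
    refine ⟨hx, ?_⟩
    show uout (s i) x = uout (s j) x
    rw [hij]

variable {A : Type} [BooleanAlgebra A]
  {cA : CylStruct (Fin n) A} {V : Set (Fin n → U)} {f : A → Set (Fin n → U)}

lemma lift_dup (hrep : WeakRep cA V f) {s : Fin n → UP ι U D} (hs : s ∈ liftSet D V)
    {i j : Fin n} (hij : i ≠ j) : Function.update s i (s j) ∈ liftSet D V := by
  set S : Fin n → ι → U := fun k => if k = i then uout (s j) else uout (s k) with hS
  have hreps : ∀ k, umk D (S k) = Function.update s i (s j) k := by
    intro k
    by_cases hk : k = i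
    · subst hk
      simp only [hS, if_pos rfl, Function.update_self, umk_uout]
    · simp only [hS, if_neg hk, Function.update_of_ne hk, umk_uout]
  rw [mem_liftSet_iff_reps hreps]
  have hsD : {x | tupOut s x ∈ V} ∈ D := hs
  refine Filter.mem_of_superset hsD ?_
  intro x hx
  have he : (fun k => S k x)
      = Function.update (tupOut s x) i (tupOut s x j) := by
    funext k
    by_cases hk : k = i
    · subst hk; simp only [hS, if_pos rfl, Function.update_self]; rfl
    · simp only [hS, if_neg hk, Function.update_of_ne hk]; rfl
  show (fun k => S k x) ∈ V
  rw [he]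
  exact rep_dup hrep hx hij

lemma weak_lift (hrep : WeakRep cA V f) :
    WeakRep cA (liftSet D V : Set (Fin n → UP ι U D)) (fun a => liftSet D (f a)) := by
  refine ⟨?_, ?_, ?_, ?_, ?_, ?_⟩
  · rw [hrep.map_top]
  · rw [hrep.map_bot, liftSet_empty]
  · intro x y; rw [hrep.map_sup, liftSet_union]
  · intro x; rw [hrep.map_compl, liftSet_diff]
  · intro i x; rw [hrep.map_c, lift_cylOp]
  · intro i j; rw [hrep.map_d, lift_diagSet]

end MSqAux
namespace MSqAux

open Set Filter

variable {ι U : Type} {D : Ultrafilter ι} {n m : ℕ} {A : Type} [BooleanAlgebra A]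
  {cA : CylStruct (Fin n) A} {V : Set (Fin n → U)} {f : A → Set (Fin n → U)}

lemma lift_msquare (hsq : IsMSquare n m cA V f) :
    IsMSquare n m cA (liftSet D V) (fun a => liftSet D (f a)) := by
  intro sh hsh a i l hl htrig
  have hclique : IsNClique (liftSet D V) (Set.range sh) := hsh
  -- selection sets
  have hP : ∀ q : Fin n → Fin m,
      {x | Function.Injective (fun k => sh (q k)) → (fun k => uout (sh (q k)) x) ∈ V} ∈ D := by
    intro q
    by_cases hq : Function.Injective (fun k => sh (q k))
    · have hu : (fun k => sh (q k)) ∈ liftSet D V :=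
        hclique _ (fun k => ⟨q k, rfl⟩) hq
      have huD : {x | (fun k => uout (sh (q k)) x) ∈ V} ∈ D := hu
      exact Filter.mem_of_superset huD (fun x hx _ => hx)
    · exact Filter.mem_of_superset Filter.univ_mem (fun x _ hq2 => absurd hq2 hq)
  have hPall : (⋂ q : Fin n → Fin m,
      {x | Function.Injective (fun k => sh (q k)) → (fun k => uout (sh (q k)) x) ∈ V})
      ∈ (D : Filter ι) := Filter.iInter_mem.2 hP
  have hT0 : {x | (fun k => uout (sh (l k)) x) ∈ f (cA.c i a)} ∈ D := htrig
  set G : Set ι := {x | (fun k => uout (sh (l k)) x) ∈ f (cA.c i a)} ∩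
      (⋂ q : Fin n → Fin m,
      {x | Function.Injective (fun k => sh (q k)) → (fun k => uout (sh (q k)) x) ∈ V})
    with hG
  have hGD : G ∈ D := Filter.inter_mem hT0 hPall
  -- pointwise clique tuples
  have hCT : ∀ x ∈ G, (fun j => uout (sh j) x) ∈ CliqueTuples n m V := by
    intro x hx
    intro v hv hvinj
    choose q hq using fun k => hv k
    have hinj : Function.Injective (fun k => sh (q k)) := by
      intro k k' he
      have he' : sh (q k) = sh (q k') := he
      apply hvinj
      have h2 : uout (sh (q k)) x = uout (sh (q k')) x := by rw [he']
      have hqk : uout (sh (q k)) x = v k := hq k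
      have hqk' : uout (sh (q k')) x = v k' := hq k'
      rw [hqk, hqk'] at h2
      exact h2
    have hx2 := hx.2
    simp only [mem_iInter] at hx2
    have := hx2 q hinj
    have he : (fun k => uout (sh (q k)) x) = v := funext (fun k => hq k)
    rwa [he] at this
  -- witnesses
  have hwit : ∀ x : ι, ∃ t : Fin m → U, x ∈ G →
      (t ∈ CliqueTuples n m V ∧ (∀ j, j ≠ l i → t j = uout (sh j) x) ∧
        (fun k => t (l k)) ∈ f a) := by
    intro x
    by_cases hx : x ∈ G
    · have htr : ((fun j => uout (sh j) x) ∘ l) ∈ f (cA.c i a) := hx.1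
      obtain ⟨t, htCT, hagr, htl⟩ := hsq _ (hCT x hx) a i l hl htr
      exact ⟨t, fun _ => ⟨htCT, hagr, htl⟩⟩
    · exact ⟨(fun j => uout (sh j) x), fun hc => absurd hc hx⟩
  choose w hw using hwit
  set th : Fin m → UP ι U D := Function.update sh (l i) (umk D (fun x => w x (l i))) with hth
  have hagree : ∀ j, j ≠ l i → th j = sh j := by
    intro j hj
    simp only [hth, Function.update_of_ne hj]
  refine ⟨th, ?_, hagree, ?_⟩
  · -- th ∈ CliqueTuples of the lifted unit
    intro u hu huinj
    choose r hr using fun k => hu k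
    -- pairwise distinctness sets
    have hP2 : ∀ k k' : Fin n,
        {x | k ≠ k' → uout (u k) x ≠ uout (u k') x} ∈ D := by
      intro k k'
      by_cases hkk : k = k'
      · exact Filter.mem_of_superset Filter.univ_mem (fun x _ hne => absurd hkk hne)
      · have hne : u k ≠ u k' := fun he => hkk (huinj he)
        have : ¬ ({x | uout (u k) x = uout (u k') x} ∈ D) := by
          intro hmem
          apply hne
          calc u k = umk D (uout (u k)) := (umk_uout _).symm
            _ = umk D (uout (u k')) := umk_eq_iff.2 hmem
            _ = u k' := umk_uout _
        have hco := (Ultrafilter.compl_mem_iff_notMem (f := D)).2 this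
        refine Filter.mem_of_superset hco ?_
        intro x hx _
        exact hx
    have hP2all : (⋂ k : Fin n, ⋂ k' : Fin n,
        {x | k ≠ k' → uout (u k) x ≠ uout (u k') x}) ∈ (D : Filter ι) := by
      rw [Filter.iInter_mem]
      intro k
      rw [Filter.iInter_mem]
      intro k'
      exact hP2 k k'
    -- coordinates of th at the sample points
    have hF : ∀ j : Fin m, {x | uout (th j) x =
        (if j = l i then w x (l i) else uout (sh j) x)} ∈ D := by
      intro j
      by_cases hj : j = l i
      · have h0 : th j = umk D (fun x => w x (l i)) := by
          rw [hj]; simp only [hth, Function.update_self]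
        rw [h0]
        have h1 := uout_umk_rel (D := D) (fun x => w x (l i))
        refine Filter.mem_of_superset h1 ?_
        intro x hx
        simp only [mem_setOf_eq, if_pos hj]
        exact hx
      · have : th j = sh j := hagree j hj
        rw [this]
        refine Filter.mem_of_superset Filter.univ_mem ?_
        intro x _
        simp only [mem_setOf_eq, if_neg hj]
    have hFall : (⋂ j : Fin m, {x | uout (th j) x =
        (if j = l i then w x (l i) else uout (sh j) x)}) ∈ (D : Filter ι) :=
      Filter.iInter_mem.2 hF
    have hbig : (G ∩ ((⋂ k : Fin n, ⋂ k' : Fin n,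
        {x | k ≠ k' → uout (u k) x ≠ uout (u k') x}) ∩
        (⋂ j : Fin m, {x | uout (th j) x =
          (if j = l i then w x (l i) else uout (sh j) x)}))) ∈ D :=
      Filter.inter_mem hGD (Filter.inter_mem hP2all hFall)
    refine Filter.mem_of_superset hbig ?_
    rintro x ⟨hxG, hx2, hx3⟩
    simp only [mem_iInter] at hx2 hx3
    -- compute the coordinates
    have hcoord : ∀ k : Fin n, uout (u k) x = w x (r k) := by
      intro k
      have h1 : uout (u k) x = uout (th (r k)) x := by rw [hr k]
      rw [h1, hx3 (r k)]
      by_cases hrk : r k = l i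
      · rw [if_pos hrk, hrk]
      · rw [if_neg hrk]
        exact ((hw x hxG).2.1 (r k) hrk).symm
    have hwCT : IsNClique V (Set.range (w x)) := (hw x hxG).1
    show tupOut u x ∈ V
    have he : tupOut u x = fun k => w x (r k) := funext (fun k => hcoord k)
    rw [he]
    apply hwCT
    · intro k; exact ⟨r k, rfl⟩
    · intro k k' hkk
      have hkk' : w x (r k) = w x (r k') := hkk
      have h5 := hx2 k k'
      by_contra hne
      have hxx : uout (u k) x = uout (u k') x := by
        rw [hcoord k, hcoord k', hkk']
      exact h5 hne hxx
  · -- (th ∘ l) ∈ liftSet D (f a)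
    set S : Fin n → ι → U :=
      fun k => if k = i then (fun x => w x (l i)) else uout (sh (l k)) with hS
    have hreps : ∀ k, umk D (S k) = (th ∘ l) k := by
      intro k
      by_cases hk : k = i
      · have h0 : S k = (fun x => w x (l i)) := by
          simp only [hS]; rw [if_pos hk]
        rw [h0]
        have h1 : (th ∘ l) k = th (l i) := by rw [Function.comp_apply, hk]
        rw [h1]
        simp only [hth, Function.update_self]
      · have hlk : l k ≠ l i := fun he => hk (hl he)
        have h0 : S k = uout (sh (l k)) := by
          simp only [hS]; rw [if_neg hk]
        rw [h0]
        show umk D (uout (sh (l k))) = th (l k)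
        rw [hagree (l k) hlk, umk_uout]
    rw [mem_liftSet_iff_reps hreps]
    refine Filter.mem_of_superset hGD ?_
    intro x hx
    have he : (fun k => S k x) = (fun k => w x (l k)) := by
      funext k
      show (if k = i then (fun x => w x (l i)) else uout (sh (l k))) x = w x (l k)
      by_cases hk : k = i
      · rw [if_pos hk, hk]
      · rw [if_neg hk]
        have hlk : l k ≠ l i := fun hq => hk (hl hq)
        exact ((hw x hx).2.1 (l k) hlk).symm
    show (fun k => S k x) ∈ f a
    rw [he]
    exact (hw x hx).2.2

end MSqAux
namespace MSqAux

open Set Filter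

variable {n : ℕ} {A : Type} [BooleanAlgebra A] {Y : Type}
  {cA : CylStruct (Fin n) A} {W : Set (Fin n → Y)} {F : A → Set (Fin n → Y)}

/-- the unit relativized to the complement of the images of an ideal. -/
def relUnit (W : Set (Fin n → Y)) (F : A → Set (Fin n → Y)) (I : Set A) :
    Set (Fin n → Y) :=
  {s | s ∈ W ∧ ∀ y ∈ I, s ∉ F y}

variable {I : Set A}

lemma relUnit_sub : relUnit W F I ⊆ W := fun _ hs => hs.1

lemma q_move (hW : WeakRep cA W F) (hIc : ∀ y ∈ I, ∀ i, cA.c i y ∈ I)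
    {s t : Fin n → Y} (hs : s ∈ relUnit W F I) (htW : t ∈ W) {i : Fin n}
    (hagr : ∀ j, j ≠ i → t j = s j) : t ∈ relUnit W F I := by
  refine ⟨htW, ?_⟩
  intro y hy hty
  have hcyl : s ∈ cylOp W i (F y) := ⟨hs.1, t, hty, hagr⟩
  rw [← hW.map_c] at hcyl
  exact hs.2 (cA.c i y) (hIc y hy i) hcyl

/-- progressively duplicate the `j0`-th coordinate. -/
def dupSeq (s : Fin n → Y) (j0 : Fin n) (k : ℕ) : Fin n → Y :=
  fun j => if (j : ℕ) < k then s j0 else s j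

lemma dupSeq_zero (s : Fin n → Y) (j0 : Fin n) : dupSeq s j0 0 = s := by
  funext j; simp [dupSeq]

lemma dupSeq_last (s : Fin n → Y) (j0 : Fin n) : dupSeq s j0 n = fun _ => s j0 := by
  funext j; simp [dupSeq, j.isLt]

lemma dupSeq_succ (s : Fin n → Y) (j0 : Fin n) (k : ℕ) (hk : k < n) :
    dupSeq s j0 (k + 1) = Function.update (dupSeq s j0 k) ⟨k, hk⟩ (dupSeq s j0 k j0) := by
  funext j
  by_cases hj : j = (⟨k, hk⟩ : Fin n)
  · rw [hj, Function.update_self]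
    show (if (k : ℕ) < k + 1 then s j0 else s ⟨k, hk⟩) = dupSeq s j0 k j0
    rw [if_pos (Nat.lt_succ_self k)]
    show s j0 = if (j0 : ℕ) < k then s j0 else s j0
    by_cases h0 : (j0 : ℕ) < k
    · rw [if_pos h0]
    · rw [if_neg h0]
  · rw [Function.update_of_ne hj]
    show (if (j : ℕ) < k + 1 then s j0 else s j) = if (j : ℕ) < k then s j0 else s j
    have hjk : (j : ℕ) ≠ k := fun hh => hj (Fin.ext hh)
    by_cases h0 : (j : ℕ) < k
    · rw [if_pos h0, if_pos (Nat.lt_succ_of_lt h0)]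
    · rw [if_neg h0, if_neg (by omega)]

lemma dupSeq_memW (hW : WeakRep cA W F) {s : Fin n → Y} (hs : s ∈ W) (j0 : Fin n) :
    ∀ k, dupSeq s j0 k ∈ W := by
  intro k
  induction k with
  | zero => rw [dupSeq_zero]; exact hs
  | succ k ih =>
    by_cases hk : k < n
    · rw [dupSeq_succ s j0 k hk]
      by_cases hj0 : (⟨k, hk⟩ : Fin n) = j0
      · have : dupSeq s j0 k j0 = dupSeq s j0 k ⟨k, hk⟩ := by rw [hj0]
        rw [this, Function.update_eq_self]
        exact ih
      · exact rep_dup hW ih hj0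
    · have : dupSeq s j0 (k + 1) = dupSeq s j0 k := by
        funext j
        show (if (j : ℕ) < k + 1 then s j0 else s j) = if (j : ℕ) < k then s j0 else s j
        have h1 : (j : ℕ) < k := lt_of_lt_of_le j.isLt (by omega)
        rw [if_pos h1, if_pos (Nat.lt_succ_of_lt h1)]
      rw [this]; exact ih

lemma q_chain (hW : WeakRep cA W F) (hIc : ∀ y ∈ I, ∀ i, cA.c i y ∈ I)
    {s : Fin n → Y} (hs : s ∈ W) (j0 : Fin n) :
    (s ∈ relUnit W F I ↔ (fun _ => s j0) ∈ relUnit W F I) := by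
  have key : ∀ k, (s ∈ relUnit W F I ↔ dupSeq s j0 k ∈ relUnit W F I) := by
    intro k
    induction k with
    | zero => rw [dupSeq_zero]
    | succ k ih =>
      by_cases hk : k < n
      · rw [ih, dupSeq_succ s j0 k hk]
        by_cases hj0 : (⟨k, hk⟩ : Fin n) = j0
        · have he : dupSeq s j0 k j0 = dupSeq s j0 k ⟨k, hk⟩ := by rw [hj0]
          rw [he, Function.update_eq_self]
        · have hmem1 := dupSeq_memW hW hs j0 k
          have hmem2 : Function.update (dupSeq s j0 k) ⟨k, hk⟩ (dupSeq s j0 k j0) ∈ W :=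
            rep_dup hW hmem1 hj0
          constructor
          · intro h1
            refine q_move hW hIc h1 hmem2 (i := ⟨k, hk⟩) ?_
            intro j hj; rw [Function.update_of_ne hj]
          · intro h1
            refine q_move hW hIc h1 hmem1 (i := ⟨k, hk⟩) ?_
            intro j hj; rw [Function.update_of_ne hj]
      · rw [ih]
        have he : dupSeq s j0 (k + 1) = dupSeq s j0 k := by
          funext j
          show (if (j : ℕ) < k + 1 then s j0 else s j) = if (j : ℕ) < k then s j0 else s j
          have h1 : (j : ℕ) < k := lt_of_lt_of_le j.isLt (by omega)
          rw [if_pos h1, if_pos (Nat.lt_succ_of_lt h1)]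
        rw [he]
  have := key n
  rw [dupSeq_last] at this
  exact this

lemma q_diag (i j : Fin n) :
    diagSet W i j ∩ relUnit W F I = diagSet (relUnit W F I) i j := by
  ext s
  constructor
  · rintro ⟨⟨_, hd⟩, hrel⟩; exact ⟨hrel, hd⟩
  · rintro ⟨hrel, hd⟩; exact ⟨⟨hrel.1, hd⟩, hrel⟩

lemma q_cyl (hW : WeakRep cA W F) (hIc : ∀ y ∈ I, ∀ i, cA.c i y ∈ I)
    (i : Fin n) (a : A) :
    F (cA.c i a) ∩ relUnit W F I = cylOp (relUnit W F I) i (F a ∩ relUnit W F I) := by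
  ext s
  constructor
  · rintro ⟨hsc, hsrel⟩
    rw [hW.map_c] at hsc
    obtain ⟨hsW, t, htF, hagr⟩ := hsc
    have htW : t ∈ W := by
      have := subset_V hW a
      exact this htF
    have htrel : t ∈ relUnit W F I := q_move hW hIc hsrel htW hagr
    exact ⟨hsrel, t, ⟨htF, htrel⟩, hagr⟩
  · rintro ⟨hsrel, t, ⟨htF, htrel⟩, hagr⟩
    refine ⟨?_, hsrel⟩
    rw [hW.map_c]
    exact ⟨hsrel.1, t, htF, hagr⟩

end MSqAux
namespace MSqAux

open Set Filter

variable {n m : ℕ} {A : Type} [BooleanAlgebra A] {Y : Type}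
  {cA : CylStruct (Fin n) A} {W : Set (Fin n → Y)} {F : A → Set (Fin n → Y)}
  {I : Set A}

lemma CT_mono {V1 V2 : Set (Fin n → Y)} (h : V1 ⊆ V2) :
    CliqueTuples n m V1 ⊆ CliqueTuples n m V2 := by
  intro s hs
  intro u hu huinj
  exact h (hs u hu huinj)

lemma q_msq (hW : WeakRep cA W F) (hmsq : IsMSquare n m cA W F)
    (hIc : ∀ y ∈ I, ∀ i, cA.c i y ∈ I) (hn2 : 2 ≤ n) :
    ∀ s ∈ CliqueTuples n m (relUnit W F I), ∀ (a : A) (i : Fin n) (l : Fin n → Fin m),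
    Function.Injective l → (s ∘ l) ∈ F (cA.c i a) ∩ relUnit W F I →
    ∃ t ∈ CliqueTuples n m (relUnit W F I), (∀ j, j ≠ l i → t j = s j) ∧
      (t ∘ l) ∈ F a ∩ relUnit W F I := by
  classical
  intro s hs a i l hl htrig
  have hn0 : 0 < n := by omega
  set i0 : Fin n := ⟨0, hn0⟩ with hi0
  have hCTW : s ∈ CliqueTuples n m W := CT_mono (relUnit_sub) hs
  obtain ⟨t, htCT, hagr, htl⟩ := hmsq s hCTW a i l hl htrig.1
  have htCT' : IsNClique W (Set.range t) := htCT
  have htlW : (t ∘ l) ∈ W := subset_V hW a htl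
  have htlrel : (t ∘ l) ∈ relUnit W F I := by
    refine q_move hW hIc htrig.2 htlW (i := i) ?_
    intro k hk
    have hlk : l k ≠ l i := fun he => hk (hl he)
    exact hagr (l k) hlk
  refine ⟨t, ?_, hagr, ⟨htl, htlrel⟩⟩
  -- t is a clique tuple for the relativized unit
  intro u hu huinj
  have huW : u ∈ W := htCT' u hu huinj
  set R : Finset Y := Finset.image t Finset.univ with hR
  have hmemR : ∀ y : Y, y ∈ R ↔ y ∈ Set.range t := by
    intro y
    rw [hR, Finset.mem_image]
    constructor
    · rintro ⟨j, _, hj⟩; exact ⟨j, hj⟩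
    · rintro ⟨j, hj⟩; exact ⟨j, Finset.mem_univ j, hj⟩
  by_cases hcard : R.card < n
  · exfalso
    have h1 : (Finset.image u Finset.univ).card = n := by
      rw [Finset.card_image_of_injective _ huinj, Finset.card_univ, Fintype.card_fin]
    have h2 : Finset.image u Finset.univ ⊆ R := by
      intro y hy
      rw [Finset.mem_image] at hy
      obtain ⟨k, _, hk⟩ := hy
      rw [hmemR]
      rw [← hk]
      exact hu k
    have := Finset.card_le_card h2
    omega
  · push_neg at hcard
    set c0 : Y := (t ∘ l) i0 with hc0
    set w0 : Y := u i0 with hw0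
    have hc0R : c0 ∈ R := by
      rw [hmemR]; exact ⟨l i0, rfl⟩
    have hw0R : w0 ∈ R := by
      rw [hmemR]; exact hu i0
    have hpair : ({c0, w0} : Finset Y) ⊆ R := by
      intro y hy
      rw [Finset.mem_insert, Finset.mem_singleton] at hy
      rcases hy with h | h
      · rw [h]; exact hc0R
      · rw [h]; exact hw0R
    have hpaircard : ({c0, w0} : Finset Y).card ≤ n := by
      have := Finset.card_insert_le c0 ({w0} : Finset Y)
      have h2 : ({w0} : Finset Y).card = 1 := Finset.card_singleton w0
      omega
    obtain ⟨T, hT1, hT2, hT3⟩ := Finset.exists_subsuperset_card_eq hpair hpaircard hcard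
    set e : {y // y ∈ T} ≃ Fin n := Finset.equivFinOfCardEq hT3 with he
    set x : Fin n → Y := fun k => ((e.symm k) : Y) with hx
    have hxinj : Function.Injective x := by
      intro k k' hkk
      have h1 : e.symm k = e.symm k' := Subtype.ext hkk
      exact e.symm.injective h1
    have hxval : ∀ k, x k ∈ Set.range t := by
      intro k
      rw [← hmemR]
      exact hT2 (e.symm k).2
    have hxW : x ∈ W := htCT' x hxval hxinj
    have hc0T : c0 ∈ T := hT1 (Finset.mem_insert_self c0 {w0})
    have hw0T : w0 ∈ T := hT1 (by
      rw [Finset.mem_insert, Finset.mem_singleton]; right; rfl)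
    set k0 : Fin n := e ⟨c0, hc0T⟩ with hk0def
    set k1 : Fin n := e ⟨w0, hw0T⟩ with hk1def
    have hk0 : x k0 = c0 := by
      rw [hx, hk0def]
      simp only [Equiv.symm_apply_apply]
    have hk1 : x k1 = w0 := by
      rw [hx, hk1def]
      simp only [Equiv.symm_apply_apply]
    have h_c0 : (fun _ : Fin n => c0) ∈ relUnit W F I := by
      have h1 := (q_chain hW hIc htlW i0).1 htlrel
      exact h1
    have h_x : x ∈ relUnit W F I := by
      rw [q_chain hW hIc hxW k0, hk0]
      exact h_c0
    have h_w0 : (fun _ : Fin n => w0) ∈ relUnit W F I := by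
      have h1 := (q_chain hW hIc hxW k1).1 h_x
      rw [hk1] at h1
      exact h1
    rw [q_chain hW hIc huW i0]
    exact h_w0

end MSqAux
namespace MSqAux

open Set

variable {n m : ℕ}

/-- transport a representation to the sub-base actually used, to obtain `BaseIsUnion`. -/
lemma transport {B : Type} [BooleanAlgebra B] (cB : CylStruct (Fin n) B) {Y : Type}
    (W' : Set (Fin n → Y)) (g : B → Set (Fin n → Y))
    (hinj : Function.Injective g)
    (htop : g ⊤ = W')
    (hbot : g ⊥ = ∅)
    (hsup : ∀ x y, g (x ⊔ y) = g x ∪ g y)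
    (hcompl : ∀ x, g xᶜ = W' \ g x)
    (hc : ∀ i x, g (cB.c i x) = cylOp W' i (g x))
    (hd : ∀ i j, g (cB.d i j) = diagSet W' i j)
    (hmsq : IsMSquare n m cB W' g) :
    ∃ (U : Type) (V : Set (Fin n → U)) (f : B → Set (Fin n → U)),
      IsRepOn cB V f ∧ BaseIsUnion V ∧ IsMSquare n m cB V f := by
  have hgsub : ∀ b, g b ⊆ W' := by
    intro b
    have h1 : g b = W' \ g bᶜ := by
      have := hcompl bᶜ
      rw [compl_compl] at this
      exact this
    rw [h1]
    exact diff_subset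
  set Z := {y : Y // ∃ s, s ∈ W' ∧ ∃ j, s j = y} with hZ
  set em : (Fin n → Z) → (Fin n → Y) := fun s => (fun j => (s j : Y)) with hem
  set V2 : Set (Fin n → Z) := {s | em s ∈ W'} with hV2
  set g2 : B → Set (Fin n → Z) := fun b => {s | em s ∈ g b} with hg2
  have heminj : ∀ s t : Fin n → Z, em s = em t → s = t := by
    intro s t hst
    funext j
    apply Subtype.ext
    exact congrFun hst j
  -- lifting tuples from W'
  have hlift : ∀ p : Fin n → Y, p ∈ W' → ∃ s : Fin n → Z, em s = p := by
    intro p hp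
    refine ⟨fun j => ⟨p j, ⟨p, hp, j, rfl⟩⟩, ?_⟩
    funext j
    rfl
  -- clique correspondence
  have hCT : ∀ s2 : Fin m → Z,
      (s2 ∈ CliqueTuples n m V2 ↔ (fun j => (s2 j : Y)) ∈ CliqueTuples n m W') := by
    intro s2
    constructor
    · intro hs2 v hv hvinj
      choose q hq using fun k => hv k
      set v2 : Fin n → Z := fun k => s2 (q k) with hv2
      have hv2inj : Function.Injective v2 := by
        intro k k' hkk
        apply hvinj
        have h1 : (v2 k : Y) = (v2 k' : Y) := by rw [hkk]
        have h2 : (v2 k : Y) = v k := hq k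
        have h3 : (v2 k' : Y) = v k' := hq k'
        rw [h2, h3] at h1
        exact h1
      have hv2mem : v2 ∈ V2 := hs2 v2 (fun k => ⟨q k, rfl⟩) hv2inj
      have he : em v2 = v := funext (fun k => hq k)
      rw [← he]
      exact hv2mem
    · intro hs2 v2 hv2 hv2inj
      show em v2 ∈ W'
      apply hs2
      · intro k
        obtain ⟨jk, hjk⟩ := hv2 k
        refine ⟨jk, ?_⟩
        show (s2 jk : Y) = (v2 k : Y)
        rw [hjk]
      · intro k k' hkk
        apply hv2inj
        apply Subtype.ext
        exact hkk
  refine ⟨Z, V2, g2, ⟨?_, ?_, ?_, ?_, ?_, ?_, ?_⟩, ?_, ?_⟩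
  · -- injective
    intro b b' hbb
    apply hinj
    ext p
    constructor
    · intro hpb
      obtain ⟨s, hs⟩ := hlift p (hgsub b hpb)
      have : s ∈ g2 b := by rw [hg2]; simp only [mem_setOf_eq, hs]; exact hpb
      rw [hbb] at this
      have h2 : em s ∈ g b' := this
      rwa [hs] at h2
    · intro hpb
      obtain ⟨s, hs⟩ := hlift p (hgsub b' hpb)
      have : s ∈ g2 b' := by rw [hg2]; simp only [mem_setOf_eq, hs]; exact hpb
      rw [← hbb] at this
      have h2 : em s ∈ g b := this
      rwa [hs] at h2
  · -- map_top
    ext s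
    show em s ∈ g ⊤ ↔ s ∈ V2
    rw [htop]
    exact Iff.rfl
  · -- map_bot
    ext s
    show em s ∈ g ⊥ ↔ s ∈ (∅ : Set (Fin n → Z))
    rw [hbot]
    exact Iff.rfl
  · -- map_sup
    intro x y
    ext s
    show em s ∈ g (x ⊔ y) ↔ _
    rw [hsup]
    exact Iff.rfl
  · -- map_compl
    intro x
    ext s
    show em s ∈ g xᶜ ↔ s ∈ V2 \ g2 x
    rw [hcompl]
    constructor
    · rintro ⟨h1, h2⟩
      exact ⟨h1, h2⟩
    · rintro ⟨h1, h2⟩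
      exact ⟨h1, h2⟩
  · -- map_c
    intro i x
    ext s
    show em s ∈ g (cB.c i x) ↔ s ∈ cylOp V2 i (g2 x)
    rw [hc]
    constructor
    · rintro ⟨hsW, t, htg, hagr⟩
      obtain ⟨t2, ht2⟩ := hlift t (hgsub x htg)
      refine ⟨hsW, t2, ?_, ?_⟩
      · show em t2 ∈ g x
        rwa [ht2]
      · intro j hj
        apply Subtype.ext
        show em t2 j = em s j
        rw [ht2]
        exact hagr j hj
    · rintro ⟨hsW, t2, ht2g, hagr⟩
      refine ⟨hsW, em t2, ht2g, ?_⟩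
      intro j hj
      show (t2 j : Y) = (s j : Y)
      rw [hagr j hj]
  · -- map_d
    intro i j
    ext s
    show em s ∈ g (cB.d i j) ↔ s ∈ diagSet V2 i j
    rw [hd]
    constructor
    · rintro ⟨h1, h2⟩
      exact ⟨h1, Subtype.ext h2⟩
    · rintro ⟨h1, h2⟩
      refine ⟨h1, ?_⟩
      show (s i : Y) = (s j : Y)
      rw [h2]
  · -- BaseIsUnion
    intro z
    obtain ⟨p, hpW, j, hpj⟩ := z.2
    obtain ⟨s, hs⟩ := hlift p hpW
    refine ⟨s, ?_, j, ?_⟩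
    · show em s ∈ W'
      rwa [hs]
    · apply Subtype.ext
      show em s j = (z : Y)
      rw [hs, hpj]
  · -- m-square
    intro s2 hs2 b i l hl htrig
    have hs2' : (fun j => (s2 j : Y)) ∈ CliqueTuples n m W' := (hCT s2).1 hs2
    have htrig' : ((fun j => (s2 j : Y)) ∘ l) ∈ g (cB.c i b) := htrig
    obtain ⟨t, htCT, hagr, htl⟩ := hmsq _ hs2' b i l hl htrig'
    have htlW : (t ∘ l) ∈ W' := hgsub b htl
    -- lift t to Z
    have hmemZ : ∀ j : Fin m, ∃ p, p ∈ W' ∧ ∃ k, p k = t j := by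
      intro j
      by_cases hex : ∃ k : Fin n, l k = j
      · obtain ⟨k, hk⟩ := hex
        exact ⟨t ∘ l, htlW, k, by rw [Function.comp_apply, hk]⟩
      · have hj : j ≠ l i := fun he => hex ⟨i, he.symm⟩
        have h1 : t j = (s2 j : Y) := hagr j hj
        obtain ⟨p, hpW, k, hpk⟩ := (s2 j).2
        exact ⟨p, hpW, k, by rw [hpk, h1]⟩
    set t2 : Fin m → Z := fun j => ⟨t j, hmemZ j⟩ with ht2
    have hemt2 : (fun j => (t2 j : Y)) = t := funext (fun j => rfl)
    refine ⟨t2, ?_, ?_, ?_⟩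
    · rw [hCT t2, hemt2]
      exact htCT
    · intro j hj
      apply Subtype.ext
      show (t2 j : Y) = (s2 j : Y)
      rw [ht2]
      exact hagr j hj
    · show em (t2 ∘ l) ∈ g b
      have he : em (t2 ∘ l) = t ∘ l := funext (fun k => rfl)
      rwa [he]

end MSqAux
/-- Let `2 < n < m < ω`.  If `A ∈ CA_n` has an `m`-square
representation and `h : A → B` is a surjective homomorphism of `CA_n`'s, then `B` has
an `m`-square representation.  (Together with closure under subalgebras and products,
the class of `CA_n`'s having `m`-square representations is a variety.) -/
theorem m_square_representations_closed_under_homomorphic_images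
    (n m : ℕ) (hn : 2 < n) (hm : n < m) {A B : Type}
    [BooleanAlgebra A] [BooleanAlgebra B]
    (cA : CylStruct (Fin n) A) (cB : CylStruct (Fin n) B)
    (h : A → B) (hhom : IsCylHom cA cB h) (hsurj : Function.Surjective h)
    (hA : ∃ (U : Type) (V : Set (Fin n → U)) (f : A → Set (Fin n → U)),
      IsRepOn cA V f ∧ BaseIsUnion V ∧ IsMSquare n m cA V f) :
    ∃ (U : Type) (V : Set (Fin n → U)) (f : B → Set (Fin n → U)),
      IsRepOn cB V f ∧ BaseIsUnion V ∧ IsMSquare n m cB V f := by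
  classical
  obtain ⟨U, V, f, hrep, _hbase, hsq⟩ := hA
  have hw : MSqAux.WeakRep cA V f := MSqAux.IsRepOn.toWeak hrep
  haveI : Nonempty (Finset A) := ⟨∅⟩
  haveI : (Filter.atTop : Filter (Finset A)).NeBot := Filter.atTop_neBot
  set D : Ultrafilter (Finset A) := Ultrafilter.of Filter.atTop with hDdef
  have hD : ∀ y : A, {lam : Finset A | y ∈ lam} ∈ D := by
    intro y
    have h1 : {lam : Finset A | {y} ≤ lam} ∈ (Filter.atTop : Filter (Finset A)) :=
      Filter.mem_atTop {y}
    have h2 := Ultrafilter.of_le (Filter.atTop : Filter (Finset A)) h1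
    refine Filter.mem_of_superset h2 ?_
    intro lam hlam
    exact Finset.singleton_subset_iff.1 hlam
  set Fh : A → Set (Fin n → MSqAux.UP (Finset A) U D) :=
    fun a => MSqAux.liftSet D (f a) with hFhdef
  set Wh : Set (Fin n → MSqAux.UP (Finset A) U D) := MSqAux.liftSet D V with hWhdef
  have hWh : MSqAux.WeakRep cA Wh Fh := MSqAux.weak_lift hw
  have hmsqh : IsMSquare n m cA Wh Fh := MSqAux.lift_msquare hsq
  set I : Set A := {a | h a = ⊥} with hIdef
  have hIc : ∀ y ∈ I, ∀ i, cA.c i y ∈ I := by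
    intro y hy i
    have hy' : h y = ⊥ := hy
    show h (cA.c i y) = ⊥
    rw [hhom.map_c, hy']
    exact cB.c_bot i
  set sig : B → A := Function.surjInv hsurj with hsigdef
  have hsig : ∀ b, h (sig b) = b := fun b => Function.surjInv_eq hsurj b
  set W' : Set (Fin n → MSqAux.UP (Finset A) U D) := MSqAux.relUnit Wh Fh I with hW'def
  set g : B → Set (Fin n → MSqAux.UP (Finset A) U D) :=
    fun b => Fh (sig b) ∩ W' with hgdef
  -- well-definedness modulo the kernel
  have wdsub : ∀ a a', h a = h a' → Fh a ∩ W' ⊆ Fh a' ∩ W' := by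
    intro a a' he s hs
    obtain ⟨hsF, hsrel⟩ := hs
    by_cases hsF' : s ∈ Fh a'
    · exact ⟨hsF', hsrel⟩
    · exfalso
      have hyI : (a ⊓ a'ᶜ) ∈ I := by
        show h (a ⊓ a'ᶜ) = ⊥
        rw [hhom.bool.map_inf, hhom.bool.map_compl, he]
        exact inf_compl_eq_bot
      apply hsrel.2 _ hyI
      rw [MSqAux.rep_inf hWh, hWh.map_compl]
      exact ⟨hsF, ⟨hsrel.1, hsF'⟩⟩
  have wd : ∀ a a', h a = h a' → Fh a ∩ W' = Fh a' ∩ W' :=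
    fun a a' he => Set.Subset.antisymm (wdsub a a' he) (wdsub a' a he.symm)
  -- kernel-sup element of a finite set
  set eS : Finset A → A := fun lam => (lam.filter (· ∈ I)).sup id with heSdef
  have heI : ∀ lam, eS lam ∈ I := by
    intro lam
    apply Finset.sup_induction
    · show h ⊥ = ⊥
      exact hhom.bool.map_bot
    · intro a1 h1 a2 h2
      show h (a1 ⊔ a2) = ⊥
      have h1' : h a1 = ⊥ := h1
      have h2' : h a2 = ⊥ := h2
      rw [hhom.bool.map_sup, h1', h2', sup_idem]
    · intro y hy
      exact (Finset.mem_filter.1 hy).2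
  have hle : ∀ (lam : Finset A) (y : A), y ∈ I → y ∈ lam → y ≤ eS lam := by
    intro lam y hy hmem
    exact Finset.le_sup (f := id) (Finset.mem_filter.2 ⟨hmem, hy⟩)
  -- injectivity of g
  have hginj : Function.Injective g := by
    intro b b' hgg
    by_contra hne
    set z : A := (sig b ⊓ (sig b')ᶜ) ⊔ (sig b' ⊓ (sig b)ᶜ) with hzdef
    have hzI : z ∉ I := by
      intro hz
      have hz' : h z = ⊥ := hz
      rw [hzdef, hhom.bool.map_sup, hhom.bool.map_inf, hhom.bool.map_inf,
        hhom.bool.map_compl, hhom.bool.map_compl, hsig, hsig] at hz'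
      rw [sup_eq_bot_iff] at hz'
      have h1 : b ≤ b' := by
        have h0 := hz'.1
        rwa [← sdiff_eq, sdiff_eq_bot_iff] at h0
      have h2 : b' ≤ b := by
        have h0 := hz'.2
        rwa [← sdiff_eq, sdiff_eq_bot_iff] at h0
      exact hne (le_antisymm h1 h2)
    have hzb : ∀ lam : Finset A, z ⊓ (eS lam)ᶜ ≠ ⊥ := by
      intro lam hc0
      apply hzI
      have hle2 : z ≤ eS lam := by
        rw [← sdiff_eq_bot_iff, sdiff_eq]
        exact hc0
      have h3 : z ⊓ eS lam = z := inf_eq_left.2 hle2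
      show h z = ⊥
      have h4 : h (eS lam) = ⊥ := heI lam
      rw [← h3, hhom.bool.map_inf, h4, inf_bot_eq]
    have hpts : ∀ lam : Finset A, ∃ pt : Fin n → U, pt ∈ f (z ⊓ (eS lam)ᶜ) :=
      fun lam => MSqAux.rep_nonempty hrep (hzb lam)
    choose p hp using hpts
    set sh : Fin n → MSqAux.UP (Finset A) U D :=
      fun j => MSqAux.umk D (fun lam => p lam j) with hshdef
    have hshz : sh ∈ Fh z := by
      have hreps : ∀ j, MSqAux.umk D ((fun j => fun lam => p lam j) j) = sh j :=
        fun j => rfl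
      rw [hFhdef]
      rw [MSqAux.mem_liftSet_iff_reps hreps]
      refine Filter.mem_of_superset Filter.univ_mem ?_
      intro lam _
      show (fun j => p lam j) ∈ f z
      exact MSqAux.rep_mono hw inf_le_left (hp lam)
    have hshW : sh ∈ Wh := MSqAux.subset_V hWh z hshz
    have hshrel : sh ∈ W' := by
      refine ⟨hshW, ?_⟩
      intro y hy hymem
      have hyD : {lam | MSqAux.tupOut sh lam ∈ f y} ∈ D := hymem
      have hE : ∀ j : Fin n, {lam | MSqAux.uout (sh j) lam = p lam j} ∈ D := by
        intro j
        exact MSqAux.uout_umk_rel (D := D) (fun lam => p lam j)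
      have hEall : (⋂ j : Fin n, {lam | MSqAux.uout (sh j) lam = p lam j})
          ∈ (D : Filter (Finset A)) := Filter.iInter_mem.2 hE
      have hbig : ({lam | MSqAux.tupOut sh lam ∈ f y} ∩
          ((⋂ j : Fin n, {lam | MSqAux.uout (sh j) lam = p lam j}) ∩
            {lam : Finset A | y ∈ lam})) ∈ D :=
        Filter.inter_mem hyD (Filter.inter_mem hEall (hD y))
      obtain ⟨lam, hlam⟩ := Filter.nonempty_of_mem hbig
      obtain ⟨h1, h2, h3⟩ := hlam
      simp only [Set.mem_iInter] at h2
      have h4 : MSqAux.tupOut sh lam = p lam := funext (fun j => h2 j)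
      have h1 : MSqAux.tupOut sh lam ∈ f y := h1
      rw [h4] at h1
      have h5 : p lam ∈ f yᶜ := by
        refine MSqAux.rep_mono hw ?_ (hp lam)
        have h6 : y ≤ eS lam := hle lam y hy h3
        calc z ⊓ (eS lam)ᶜ ≤ (eS lam)ᶜ := inf_le_right
        _ ≤ yᶜ := compl_le_compl h6
      rw [hrep.map_compl] at h5
      exact h5.2 h1
    have hdecomp : Fh z =
        (Fh (sig b) ∩ (Wh \ Fh (sig b'))) ∪ (Fh (sig b') ∩ (Wh \ Fh (sig b))) := by
      rw [hzdef]
      show Fh ((sig b ⊓ (sig b')ᶜ) ⊔ (sig b' ⊓ (sig b)ᶜ)) = _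
      rw [hWh.map_sup, MSqAux.rep_inf hWh, MSqAux.rep_inf hWh, hWh.map_compl,
        hWh.map_compl]
    rw [hdecomp] at hshz
    rcases hshz with h1 | h1
    · have hb : sh ∈ g b := ⟨h1.1, hshrel⟩
      rw [hgg] at hb
      exact h1.2.2 hb.1
    · have hb : sh ∈ g b' := ⟨h1.1, hshrel⟩
      rw [← hgg] at hb
      exact h1.2.2 hb.1
  -- homomorphism-style identities for g
  have g_c : ∀ (i : Fin n) (b : B), g (cB.c i b) = Fh (cA.c i (sig b)) ∩ W' := by
    intro i b
    apply wd
    rw [hsig, hhom.map_c, hsig]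
  have g_top : g ⊤ = W' := by
    have h1 : g ⊤ = Fh ⊤ ∩ W' := by
      apply wd
      rw [hsig, hhom.bool.map_top]
    rw [h1, hWh.map_top]
    exact Set.inter_eq_self_of_subset_right MSqAux.relUnit_sub
  have g_bot : g ⊥ = ∅ := by
    have hsb : sig ⊥ ∈ I := by
      show h (sig ⊥) = ⊥
      rw [hsig]
    ext s
    simp only [Set.mem_empty_iff_false, iff_false]
    rintro ⟨h1, h2⟩
    exact h2.2 (sig ⊥) hsb h1
  have g_sup : ∀ x y : B, g (x ⊔ y) = g x ∪ g y := by
    intro x y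
    have h1 : g (x ⊔ y) = Fh (sig x ⊔ sig y) ∩ W' := by
      apply wd
      rw [hsig, hhom.bool.map_sup, hsig, hsig]
    rw [h1, hWh.map_sup, Set.union_inter_distrib_right]
  have g_compl : ∀ x : B, g xᶜ = W' \ g x := by
    intro x
    have h1 : g xᶜ = Fh (sig x)ᶜ ∩ W' := by
      apply wd
      rw [hsig, hhom.bool.map_compl, hsig]
    rw [h1, hWh.map_compl]
    ext s
    constructor
    · rintro ⟨⟨hsW, hsn⟩, hsrel⟩
      exact ⟨hsrel, fun hc => hsn hc.1⟩
    · rintro ⟨hsrel, hsn⟩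
      refine ⟨⟨hsrel.1, fun hc => hsn ⟨hc, hsrel⟩⟩, hsrel⟩
  have g_cyl : ∀ (i : Fin n) (x : B), g (cB.c i x) = cylOp W' i (g x) := by
    intro i x
    rw [g_c i x]
    rw [hW'def]
    rw [MSqAux.q_cyl hWh hIc i (sig x)]
  have g_d : ∀ i j : Fin n, g (cB.d i j) = diagSet W' i j := by
    intro i j
    have h1 : g (cB.d i j) = Fh (cA.d i j) ∩ W' := by
      apply wd
      rw [hsig, hhom.map_d]
    rw [h1, hWh.map_d, hW'def, MSqAux.q_diag]
  have g_msq : IsMSquare n m cB W' g := by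
    intro s hs b i l hl htrig
    rw [g_c i b] at htrig
    have h2 : (s ∘ l) ∈ Fh (cA.c i (sig b)) ∩ MSqAux.relUnit Wh Fh I := htrig
    obtain ⟨t, htCT, hagr, htl⟩ :=
      MSqAux.q_msq hWh hmsqh hIc (by omega) s hs (sig b) i l hl h2
    exact ⟨t, htCT, hagr, htl⟩
  exact MSqAux.transport cB W' g hginj g_top g_bot g_sup g_compl g_cyl g_d g_msq
end

section
/- Let 2 < n < ω. Every completely representable CA_n is atomic and is a complete subalgebra of the n-neat reduct of an atomic CA_ω: CRCA_n ⊆ S_c Nr_n(CA_ω ∩ At) ∩ At, and consequently CRCA_n ⊆ S_c Nr_n CA_ω ∩ At. -/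
namespace CRAux

variable {U : Type}

/-- Sequences whose range lies in a single block of `𝒦`. -/
def Blk (𝒦 : Set (Set U)) : Type := {s : ℕ → U // ∃ W ∈ 𝒦, ∀ i, s i ∈ W}

def cyl (𝒦 : Set (Set U)) (i : ℕ) (X : Set (Blk 𝒦)) : Set (Blk 𝒦) :=
  {s | ∃ t ∈ X, ∀ j, j ≠ i → t.1 j = s.1 j}

def diag (𝒦 : Set (Set U)) (i j : ℕ) : Set (Blk 𝒦) := {s | s.1 i = s.1 j}

lemma same_block {𝒦 : Set (Set U)}
    (hdisj : ∀ W ∈ 𝒦, ∀ W' ∈ 𝒦, W ≠ W' → Disjoint W W')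
    {W W' : Set U} (hW : W ∈ 𝒦) (hW' : W' ∈ 𝒦) {u : U} (h1 : u ∈ W) (h2 : u ∈ W') :
    W = W' := by
  by_contra hne
  exact Set.disjoint_left.1 (hdisj W hW W' hW' hne) h1 h2

lemma cyl_comm_sub {𝒦 : Set (Set U)}
    (hdisj : ∀ W ∈ 𝒦, ∀ W' ∈ 𝒦, W ≠ W' → Disjoint W W')
    (i j : ℕ) (x : Set (Blk 𝒦)) : cyl 𝒦 i (cyl 𝒦 j x) ⊆ cyl 𝒦 j (cyl 𝒦 i x) := by
  rintro s ⟨t, ⟨u, hux, hu⟩, ht⟩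
  obtain ⟨W, hW, hsW⟩ := s.2
  obtain ⟨W', hW', huW⟩ := u.2
  set m : ℕ := i + j + 1 with hm
  have hmi : m ≠ i := by omega
  have hmj : m ≠ j := by omega
  have hWW : W' = W := by
    have h1 : u.1 m = s.1 m := by rw [hu m hmj, ht m hmi]
    exact same_block hdisj hW' hW (h1 ▸ huW m) (hsW m)
  refine ⟨⟨Function.update s.1 j (u.1 j), W, hW, ?_⟩, ⟨u, hux, ?_⟩, ?_⟩
  · intro k
    rcases eq_or_ne k j with rfl | hk
    · simpa using hWW ▸ huW k
    · simpa [Function.update_of_ne hk] using hsW k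
  · intro k hk
    rcases eq_or_ne k j with rfl | hkj
    · simp
    · simp only [Function.update_of_ne hkj]
      rw [hu k hkj, ht k hk]
  · intro k hk
    simp [Function.update_of_ne hk]

/-- The full `ω`-dimensional generalized cylindric set algebra over the blocks `𝒦`. -/
def cylStructOf (𝒦 : Set (Set U))
    (hdisj : ∀ W ∈ 𝒦, ∀ W' ∈ 𝒦, W ≠ W' → Disjoint W W') :
    CylStruct ℕ (Set (Blk 𝒦)) where
  c := cyl 𝒦
  d := diag 𝒦
  c_bot i := by ext s; simp [cyl]
  le_c i x s hs := ⟨s, hs, fun _ _ => rfl⟩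
  c_inf_c i x y := by
    ext s
    constructor
    · rintro ⟨t, ht2, ht⟩
      obtain ⟨htx, u, huy, hu⟩ := ht2
      exact ⟨⟨t, htx, ht⟩, ⟨u, huy, fun k hk => (hu k hk).trans (ht k hk)⟩⟩
    · rintro ⟨⟨t, htx, ht⟩, ⟨u, huy, hu⟩⟩
      exact ⟨t, ⟨htx, u, huy, fun k hk => (hu k hk).trans (ht k hk).symm⟩, ht⟩
  c_comm i j x :=
    le_antisymm (cyl_comm_sub hdisj i j x) (cyl_comm_sub hdisj j i x)
  d_diag i := by ext s; simp [diag]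
  d_exch i j k hki hkj := by
    ext s
    constructor
    · intro hs
      obtain ⟨W, hW, hsW⟩ := s.2
      refine ⟨⟨Function.update s.1 k (s.1 i), W, hW, ?_⟩, ⟨?_, ?_⟩, ?_⟩
      · intro m
        rcases eq_or_ne m k with rfl | hm
        · simpa using hsW i
        · simpa [Function.update_of_ne hm] using hsW m
      · show Function.update s.1 k (s.1 i) i = Function.update s.1 k (s.1 i) k
        simp [Function.update_of_ne hki.symm]
      · show Function.update s.1 k (s.1 i) k = Function.update s.1 k (s.1 i) j
        simp [Function.update_of_ne hkj.symm]
        exact hs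
      · intro m hm
        simp [Function.update_of_ne hm]
    · rintro ⟨t, ⟨h1, h2⟩, ht⟩
      show s.1 i = s.1 j
      rw [← ht i hki.symm, ← ht j hkj.symm, ← h2, ← h1]
  d_cell i j x hij := by
    refine Set.eq_empty_iff_forall_notMem.2 ?_
    rintro s ⟨⟨t, ⟨hti, htx⟩, ht⟩, ⟨u, ⟨hui, hux⟩, hu⟩⟩
    have htu : t = u := by
      apply Subtype.ext
      funext k
      rcases eq_or_ne k i with rfl | hk
      · calc t.1 k = t.1 j := hti
          _ = s.1 j := ht j hij.symm
          _ = u.1 j := (hu j hij.symm).symm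
          _ = u.1 k := hui.symm
      · rw [ht k hk, ← hu k hk]
    exact hux (htu ▸ htx)

def res {𝒦 : Set (Set U)} (n : ℕ) (s : Blk 𝒦) : Fin n → U := fun i => s.1 ↑i

@[simp] lemma res_apply {𝒦 : Set (Set U)} (n : ℕ) (s : Blk 𝒦) (i : Fin n) :
    res n s i = s.1 ↑i := rfl

section RepFacts

variable {n : ℕ} {A : Type} [BooleanAlgebra A] {cA : CylStruct (Fin n) A}
  {V : Set (Fin n → U)} {f : A → Set (Fin n → U)}

lemma f_subset_V (hRep : IsRepOn cA V f) (x : A) : f x ⊆ V := by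
  have h : f x ∪ V = V := by
    rw [← hRep.map_top, ← hRep.map_sup, sup_top_eq]
  exact h ▸ Set.subset_union_left

lemma f_mono (hRep : IsRepOn cA V f) {x y : A} (h : x ≤ y) : f x ⊆ f y := by
  have h2 : f x ∪ f y = f y := by rw [← hRep.map_sup, sup_eq_right.2 h]
  exact h2 ▸ Set.subset_union_left

lemma f_inf (hRep : IsRepOn cA V f) (x y : A) : f (x ⊓ y) = f x ∩ f y := by
  have hx := f_subset_V hRep x
  have hy := f_subset_V hRep y
  have h : x ⊓ y = (xᶜ ⊔ yᶜ)ᶜ := by simp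
  rw [h, hRep.map_compl, hRep.map_sup, hRep.map_compl, hRep.map_compl]
  ext p
  have hxp := @hx p
  have hyp := @hy p
  simp only [Set.mem_diff, Set.mem_union, Set.mem_inter_iff]
  tauto

lemma f_nonempty (hRep : IsRepOn cA V f) {x : A} (hx : x ≠ ⊥) : (f x).Nonempty := by
  rw [Set.nonempty_iff_ne_empty]
  intro h
  exact hx (hRep.inj (h.trans hRep.map_bot.symm))

lemma exists_atom_mem (hRep : IsRepOn cA V f)
    (hComp : ∀ (S : Set A) (a : A), IsLUB S a → f a = ⋃ s ∈ S, f s)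
    {p : Fin n → U} (hp : p ∈ V) : ∃ a : A, IsAtom a ∧ p ∈ f a := by
  by_contra hcon
  push_neg at hcon
  have hlub : IsLUB {x : A | p ∉ f x} ⊤ := by
    constructor
    · intro x _; exact le_top
    · intro u hu
      by_cases hpu : p ∈ f uᶜ
      · exfalso
        have hub : uᶜ ≠ ⊥ := by
          intro hb; rw [hb, hRep.map_bot] at hpu; exact hpu
        refine hcon uᶜ ⟨hub, fun y hy => ?_⟩ hpu
        by_cases hpy : p ∈ f y
        · exfalso
          have hz : uᶜ ⊓ yᶜ ∈ {x : A | p ∉ f x} := by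
            rw [Set.mem_setOf_eq, f_inf hRep, hRep.map_compl, hRep.map_compl]
            rintro ⟨-, -, hc⟩
            exact hc hpy
          have hz2 : uᶜ ⊓ yᶜ ≤ u ⊓ uᶜ := le_inf (hu hz) inf_le_left
          rw [inf_compl_eq_bot, le_bot_iff] at hz2
          have : uᶜ \ y = ⊥ := by rwa [sdiff_eq]
          exact (not_le_of_gt hy) (sdiff_eq_bot_iff.1 this)
        · have hy2 : y ≤ u ⊓ uᶜ := le_inf (hu hpy) hy.le
          rw [inf_compl_eq_bot, le_bot_iff] at hy2
          exact hy2
      · have h1 : uᶜ ≤ u ⊓ uᶜ := le_inf (hu hpu) le_rfl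
        rw [inf_compl_eq_bot, le_bot_iff, compl_eq_bot] at h1
        exact h1.ge
  have hfT := hComp _ ⊤ hlub
  rw [hRep.map_top] at hfT
  rw [hfT] at hp
  simp only [Set.mem_iUnion] at hp
  obtain ⟨x, hx1, hx2⟩ := hp
  exact hx1 hx2

lemma atomic_of_rep (hRep : IsRepOn cA V f)
    (hComp : ∀ (S : Set A) (a : A), IsLUB S a → f a = ⋃ s ∈ S, f s) : IsAtomic A := by
  refine ⟨fun b => ?_⟩
  by_cases hb : b = ⊥
  · exact Or.inl hb
  · right
    obtain ⟨p, hp⟩ := f_nonempty hRep hb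
    obtain ⟨a, ha, hpa⟩ := exists_atom_mem hRep hComp (f_subset_V hRep b hp)
    refine ⟨a, ha, ?_⟩
    have hne : a ⊓ b ≠ ⊥ := by
      intro hab
      have hmem : p ∈ f (a ⊓ b) := by rw [f_inf hRep]; exact ⟨hpa, hp⟩
      rw [hab, hRep.map_bot] at hmem
      exact hmem
    rcases lt_or_eq_of_le (inf_le_left : a ⊓ b ≤ a) with h | h
    · exact absurd (ha.2 _ h) hne
    · exact inf_eq_left.1 h

end RepFacts

end CRAux

/-- Let `2 < n < ω`.  Every completely representable `CA_n` is atomic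
and is a complete subalgebra of the `n`-neat reduct of an atomic `CA_ω`:
`CRCA_n ⊆ S_c Nr_n (CA_ω ∩ At) ∩ At`; consequently `CRCA_n ⊆ S_c Nr_n CA_ω ∩ At`. -/
theorem completely_representable_subset_Sc_nr_atomic (n : ℕ) (hn : 2 < n)
    {A : Type} [BooleanAlgebra A] (cA : CylStruct (Fin n) A)
    (hA : CompletelyRepresentable n cA) :
    IsAtomic A ∧
    ∃ (B : CAlg ℕ) (f : A → B.carrier),
      IsAtomic B.carrier ∧ IsNeatEmbedNat n cA B.str f ∧
      ∀ S : Set A, IsLUB S ⊤ →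
        ∀ b ∈ nrSetNat n B.str, (∀ s ∈ S, f s ≤ b) → b = ⊤ := by
  obtain ⟨U, V, f, hGs, hRep, hComp⟩ := hA
  obtain ⟨𝒦, h𝒦ne, h𝒦disj, hV⟩ := hGs
  refine ⟨CRAux.atomic_of_rep hRep hComp, ?_⟩
  -- the target `ω`-dimensional algebra : the full set algebra on blocks of `𝒦`
  refine ⟨⟨Set (CRAux.Blk 𝒦), CRAux.cylStructOf 𝒦 h𝒦disj⟩,
    fun a => {s | CRAux.res n s ∈ f a}, inferInstance, ?_, ?_⟩
  · -- the neat embedding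
    have hres : ∀ s : CRAux.Blk 𝒦, CRAux.res n s ∈ V := by
      intro s
      obtain ⟨W, hW, h⟩ := s.2
      rw [hV]
      exact Set.mem_biUnion hW (fun i => h ↑i)
    have hlift : ∀ p ∈ V, ∃ s : CRAux.Blk 𝒦, CRAux.res n s = p := by
      intro p hp
      rw [hV] at hp
      simp only [Set.mem_iUnion] at hp
      obtain ⟨W, hW, hpW⟩ := hp
      have h0 : (0 : ℕ) < n := by omega
      refine ⟨⟨fun k => if h : k < n then p ⟨k, h⟩ else p ⟨0, h0⟩, W, hW, ?_⟩, ?_⟩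
      · intro k
        by_cases h : k < n <;> simp only [h, dif_pos, dif_neg, dite_true, dite_false] <;>
          exact hpW _
      · funext i
        simp [CRAux.res, i.isLt]
    constructor
    · -- IsBoolHom
      constructor
      · ext s; simp [hRep.map_bot]
      · show {s : CRAux.Blk 𝒦 | CRAux.res n s ∈ f ⊤} = ⊤
        rw [hRep.map_top]
        exact eq_top_iff.2 fun s _ => hres s
      · intro x y; ext s; simp [hRep.map_sup]
      · intro x y; ext s; simp [CRAux.f_inf hRep]
      · intro x; ext s; simp [hRep.map_compl, hres s]
    · -- injectivity
      intro a b hab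
      have hab' : ({s : CRAux.Blk 𝒦 | CRAux.res n s ∈ f a}) =
          {s | CRAux.res n s ∈ f b} := hab
      apply hRep.inj
      ext p
      constructor
      · intro hp
        obtain ⟨s, rfl⟩ := hlift _ (CRAux.f_subset_V hRep a hp)
        have hs : s ∈ {s | CRAux.res n s ∈ f a} := hp
        rw [hab'] at hs
        exact hs
      · intro hp
        obtain ⟨s, rfl⟩ := hlift _ (CRAux.f_subset_V hRep b hp)
        have hs : s ∈ {s | CRAux.res n s ∈ f b} := hp
        rw [← hab'] at hs
        exact hs
    · -- c commutes
      intro i x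
      ext s
      constructor
      · intro hs
        have hs2 : CRAux.res n s ∈ cylOp V i (f x) := by
          rw [← hRep.map_c]; exact hs
        obtain ⟨hsV, t, htx, ht⟩ := hs2
        obtain ⟨W, hW, hsW⟩ := s.2
        have htV : t ∈ V := CRAux.f_subset_V hRep x htx
        rw [hV] at htV
        simp only [Set.mem_iUnion] at htV
        obtain ⟨W', hW', htW⟩ := htV
        have hmex : ∃ m : Fin n, m ≠ i := by
          rcases eq_or_ne (⟨0, by omega⟩ : Fin n) i with h0 | h0
          · exact ⟨⟨1, by omega⟩, by rw [← h0]; intro h; simpa using congrArg Fin.val h⟩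
          · exact ⟨⟨0, by omega⟩, h0⟩
        obtain ⟨m, hmi⟩ := hmex
        have hWW : W' = W := by
          have h1 : t m = s.1 ↑m := ht m hmi
          exact CRAux.same_block h𝒦disj hW' hW (h1 ▸ htW m) (hsW ↑m)
        refine ⟨⟨fun k => if h : k < n then t ⟨k, h⟩ else s.1 k, W, hW, ?_⟩, ?_, ?_⟩
        · intro k
          by_cases h : k < n <;> simp only [h, dif_pos, dif_neg, dite_true, dite_false]
          · exact hWW ▸ htW _
          · exact hsW k
        · show CRAux.res n _ ∈ f x
          have hrt : CRAux.res n
              (⟨fun k => if h : k < n then t ⟨k, h⟩ else s.1 k, W, hW, by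
                intro k
                by_cases h : k < n <;> simp only [h, dif_pos, dif_neg, dite_true, dite_false]
                · exact hWW ▸ htW _
                · exact hsW k⟩ : CRAux.Blk 𝒦) = t := by
            funext j
            simp [CRAux.res, j.isLt]
          rw [hrt]
          exact htx
        · intro k hk
          by_cases h : k < n
          · simp only [dif_pos h]
            exact ht ⟨k, h⟩ (fun he => hk (congrArg Fin.val he))
          · simp only [dif_neg h]
      · rintro ⟨T, hT, hTs⟩
        show CRAux.res n s ∈ f (cA.c i x)
        rw [hRep.map_c]
        refine ⟨hres s, CRAux.res n T, hT, fun j hj => ?_⟩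
        exact hTs ↑j (fun he => hj (Fin.ext he))
    · -- d's correspond
      intro i j
      ext s
      show CRAux.res n s ∈ f (cA.d i j) ↔ _
      rw [hRep.map_d]
      exact ⟨fun h => h.2, fun h => ⟨hres s, h⟩⟩
    · -- range lands in the neat reduct
      rintro b ⟨a, rfl⟩
      intro i hi
      apply subset_antisymm
      · rintro s ⟨t, ht, hts⟩
        show CRAux.res n s ∈ f a
        have : CRAux.res n t = CRAux.res n s := by
          funext j
          exact hts ↑j (by have := j.isLt; omega)
        rw [← this]
        exact ht
      · exact fun s hs => ⟨s, hs, fun _ _ => rfl⟩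
  · -- complete subalgebra condition
    intro S hS b _ hsb
    have hfT : f ⊤ = ⋃ s ∈ S, f s := hComp S ⊤ hS
    apply eq_top_iff.2
    intro s _
    have hsv : CRAux.res n s ∈ V := by
      obtain ⟨W, hW, h⟩ := s.2
      rw [hV]
      exact Set.mem_biUnion hW (fun i => h ↑i)
    rw [← hRep.map_top, hfT] at hsv
    simp only [Set.mem_iUnion] at hsv
    obtain ⟨x, hx, hpx⟩ := hsv
    exact hsb x hx hpx
end

section
/- Let 2 < n < ω. Then CRCA_n = S_c P FCs_n: a CA_n is completely representable if and only if it is isomorphic to a complete subalgebra of a direct product of full cylindric set algebras ℘(ⁿU_i). -/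
/-- Cylindrification in a full cylindric set algebra `℘(ⁿU)`. -/
def fullC {n : ℕ} {U : Type} (i : Fin n) (X : Set (Fin n → U)) : Set (Fin n → U) :=
  {s | ∃ t ∈ X, ∀ j, j ≠ i → t j = s j}

/-- Diagonal elements in a full cylindric set algebra `℘(ⁿU)`. -/
def fullD {n : ℕ} {U : Type} (i j : Fin n) : Set (Fin n → U) :=
  {s | s i = s j}

private lemma sigma_eta' {I : Type} {U : I → Type} (u : Σ i, U i) (i : I) (h : u.1 = i) :
    u = ⟨i, h ▸ u.2⟩ := by
  cases u
  subst h
  rfl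

/-- Embedding of a sequence in one component into the sigma type. -/
private def embFun {n : ℕ} {I : Type} {U : I → Type} (i : I) (t : Fin n → U i) :
    Fin n → Σ j, U j := fun j => ⟨i, t j⟩

private lemma embFun_fst {n : ℕ} (hn : 0 < n) {I : Type} {U : I → Type} {i i' : I}
    {t : Fin n → U i} {t' : Fin n → U i'} (h : embFun i t = embFun i' t') : i = i' :=
  congrArg Sigma.fst (congrFun h ⟨0, hn⟩)

private lemma embFun_snd {n : ℕ} {I : Type} {U : I → Type} {i : I}
    {t t' : Fin n → U i} (h : embFun i t = embFun i t') : t = t' := by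
  funext j
  have h2 := congrFun h j
  simpa [embFun] using h2

/-- Let `2 < n < ω`.  Then `CRCA_n = S_c P FCs_n`: a `CA_n` is
completely representable if and only if it embeds, as a complete subalgebra, into a
direct product of full cylindric set algebras `℘(ⁿU_i)`. -/
theorem completely_representable_iff_Sc_prod_full (n : ℕ) (hn : 2 < n)
    {A : Type} [BooleanAlgebra A] (cA : CylStruct (Fin n) A) :
    CompletelyRepresentable n cA ↔
    ∃ (I : Type) (U : I → Type) (f : A → ∀ i, Set (Fin n → U i)),
      (∀ i, Nonempty (U i)) ∧
      Function.Injective f ∧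
      f ⊥ = ⊥ ∧ f ⊤ = ⊤ ∧
      (∀ x y, f (x ⊔ y) = f x ⊔ f y) ∧
      (∀ x, f xᶜ = (f x)ᶜ) ∧
      (∀ (j : Fin n) (x : A), f (cA.c j x) = fun i => fullC j (f x i)) ∧
      (∀ j k : Fin n, f (cA.d j k) = fun i => fullD j k) ∧
      (∀ S : Set A, IsLUB S ⊤ → IsLUB (f '' S) ⊤) := by
  haveI : Nontrivial (Fin n) := ⟨⟨⟨0, by omega⟩, ⟨1, by omega⟩, by simp⟩⟩
  constructor
  · -- forward direction
    rintro ⟨U, V, f, ⟨𝒦, hne, hdisj, hV⟩, hrep, hcomp⟩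
    have hmono : ∀ {a b : A}, a ≤ b → f a ⊆ f b := by
      intro a b hab
      have h1 : f b = f a ∪ f b := by rw [← hrep.map_sup, sup_eq_right.mpr hab]
      rw [h1]
      exact Set.subset_union_left
    have fsubV : ∀ a, f a ⊆ V := by
      intro a
      rw [← hrep.map_top]
      exact hmono le_top
    have sqV : ∀ (W : {W : Set U // W ∈ 𝒦}) (s : Fin n → W.1), (fun j => (s j : U)) ∈ V := by
      intro W s
      rw [hV]
      exact Set.mem_biUnion W.2 (fun i => (s i).2)
    have memV : ∀ u ∈ V, ∃ W : {W : Set U // W ∈ 𝒦}, ∀ j, u j ∈ W.1 := by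
      intro u hu
      rw [hV] at hu
      rcases Set.mem_iUnion₂.mp hu with ⟨W, hW, hu⟩
      exact ⟨⟨W, hW⟩, hu⟩
    refine ⟨{W : Set U // W ∈ 𝒦}, fun W => W.1,
      fun a W => {s : Fin n → W.1 | (fun j => (s j : U)) ∈ f a},
      ?_, ?_, ?_, ?_, ?_, ?_, ?_, ?_, ?_⟩
    · exact fun W => (hne W.1 W.2).to_subtype
    · -- injective
      intro a b hab
      apply hrep.inj
      have key : ∀ a b : A,
          (fun a (W : {W : Set U // W ∈ 𝒦}) =>
            {s : Fin n → W.1 | (fun j => (s j : U)) ∈ f a}) a =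
          (fun a (W : {W : Set U // W ∈ 𝒦}) =>
            {s : Fin n → W.1 | (fun j => (s j : U)) ∈ f a}) b →
          f a ⊆ f b := by
        intro a b h u hu
        rcases memV u (fsubV a hu) with ⟨W, hW⟩
        have h2 := congrFun h W
        have hs : (fun j => (⟨u j, hW j⟩ : W.1)) ∈
            (fun a (W : {W : Set U // W ∈ 𝒦}) =>
              {s : Fin n → W.1 | (fun j => (s j : U)) ∈ f a}) a W := hu
        rw [h2] at hs
        exact hs
      exact Set.Subset.antisymm (key a b hab) (key b a hab.symm)
    · -- bot
      funext W
      ext s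
      simp [hrep.map_bot]
    · -- top
      funext W
      ext s
      simp only [Set.mem_setOf_eq, hrep.map_top, Pi.top_apply, Set.top_eq_univ,
        Set.mem_univ, iff_true]
      exact sqV W s
    · -- sup
      intro x y
      funext W
      ext s
      simp [hrep.map_sup]
    · -- compl
      intro x
      funext W
      ext s
      simp only [Set.mem_setOf_eq, hrep.map_compl, Set.mem_diff, Pi.compl_apply,
        Set.mem_compl_iff]
      exact and_iff_right (sqV W s)
    · -- cylindrification
      intro i x
      funext W
      ext s
      simp only [Set.mem_setOf_eq, hrep.map_c, cylOp, fullC]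
      constructor
      · rintro ⟨hsV, t, htx, hagree⟩
        obtain ⟨W', hW'⟩ := memV t (fsubV x htx)
        obtain ⟨j0, hj0⟩ := exists_ne i
        have htj0 : t j0 = (s j0 : U) := hagree j0 hj0
        have hWW' : W'.1 = W.1 := by
          by_contra hWne
          have hd := hdisj W'.1 W'.2 W.1 W.2 hWne
          exact Set.disjoint_left.mp hd (hW' j0) (htj0 ▸ (s j0).2)
        refine ⟨fun j => ⟨t j, hWW' ▸ hW' j⟩, htx, ?_⟩
        intro j hj
        exact Subtype.ext (hagree j hj)
      · rintro ⟨tt, htt, hagree⟩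
        refine ⟨sqV W s, fun j => (tt j : U), htt, ?_⟩
        intro j hj
        exact congrArg Subtype.val (hagree j hj)
    · -- diagonals
      intro j k
      funext W
      ext s
      simp only [Set.mem_setOf_eq, hrep.map_d, diagSet, fullD]
      constructor
      · rintro ⟨-, h⟩
        exact Subtype.ext h
      · intro h
        exact ⟨sqV W s, congrArg Subtype.val h⟩
    · -- complete subalgebra condition
      intro S hS
      constructor
      · rintro x ⟨a, ha, rfl⟩
        exact le_top
      · intro b hb
        intro W s _
        have hsV : (fun j => (s j : U)) ∈ V := sqV W s
        rw [← hrep.map_top, hcomp S ⊤ hS] at hsV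
        rcases Set.mem_iUnion₂.mp hsV with ⟨x, hxS, hx⟩
        exact hb (Set.mem_image_of_mem _ hxS) W hx
  · -- backward direction
    rintro ⟨I, U, F, hNE, hinj, hbot, htop, hsup, hcompl, hc, hd, hlub⟩
    have hn0 : 0 < n := by omega
    have Fmono : ∀ {a b : A}, a ≤ b → ∀ i, F a i ⊆ F b i := by
      intro a b hab i
      have h1 : F b = F a ⊔ F b := by rw [← hsup, sup_eq_right.mpr hab]
      intro t ht
      rw [h1]
      exact Set.mem_union_left _ ht
    have mem_g : ∀ (a : A) (i : I) (t : Fin n → U i),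
        embFun i t ∈ {s : Fin n → Σ j, U j | ∃ i t, s = embFun i t ∧ t ∈ F a i} ↔
          t ∈ F a i := by
      intro a i t
      constructor
      · rintro ⟨i', t', heq, ht'⟩
        obtain rfl := embFun_fst hn0 heq
        obtain rfl := embFun_snd heq
        exact ht'
      · intro ht
        exact ⟨i, t, rfl, ht⟩
    refine ⟨Σ i, U i, {s | ∃ i t, s = embFun i t},
      fun a => {s | ∃ i t, s = embFun i t ∧ t ∈ F a i}, ?_, ?_, ?_⟩
    · -- IsGsUnit
      refine ⟨Set.range (fun i : I => {u : Σ j, U j | u.1 = i}), ?_, ?_, ?_⟩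
      · rintro W ⟨i, rfl⟩
        obtain ⟨u⟩ := hNE i
        exact ⟨⟨i, u⟩, rfl⟩
      · rintro W ⟨i, rfl⟩ W' ⟨i', rfl⟩ hWne
        have hii : i ≠ i' := by
          rintro rfl
          exact hWne rfl
        rw [Set.disjoint_left]
        rintro u hu hu'
        exact hii ((hu : u.1 = i).symm.trans (hu' : u.1 = i'))
      · ext s
        constructor
        · rintro ⟨i, t, rfl⟩
          exact Set.mem_biUnion ⟨i, rfl⟩ (fun j => rfl)
        · intro hs
          rcases Set.mem_iUnion₂.mp hs with ⟨W, ⟨i, rfl⟩, hW⟩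
          refine ⟨i, fun j => (hW j : (s j).1 = i) ▸ (s j).2, ?_⟩
          funext j
          exact sigma_eta' (s j) i (hW j)
    · -- IsRepOn
      refine ⟨?_, ?_, ?_, ?_, ?_, ?_, ?_⟩
      · -- inj
        intro a b hab
        apply hinj
        have key : ∀ a b : A,
            {s : Fin n → Σ j, U j | ∃ i t, s = embFun i t ∧ t ∈ F a i} =
            {s : Fin n → Σ j, U j | ∃ i t, s = embFun i t ∧ t ∈ F b i} →
            ∀ i, F a i ⊆ F b i := by
          intro a b h i t ht
          exact (mem_g b i t).mp (h ▸ (mem_g a i t).mpr ht)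
        funext i
        exact Set.Subset.antisymm (key a b hab i) (key b a hab.symm i)
      · -- top
        ext s
        simp only [Set.mem_setOf_eq]
        constructor
        · rintro ⟨i, t, rfl, -⟩
          exact ⟨i, t, rfl⟩
        · rintro ⟨i, t, rfl⟩
          refine ⟨i, t, rfl, ?_⟩
          have h2 : F ⊤ i = Set.univ := by simpa using congrFun htop i
          rw [h2]
          trivial
      · -- bot
        ext s
        simp only [Set.mem_setOf_eq, Set.mem_empty_iff_false, iff_false]
        rintro ⟨i, t, -, ht⟩
        have h2 : F ⊥ i = (∅ : Set (Fin n → U i)) := by simpa using congrFun hbot i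
        rw [h2] at ht
        exact ht
      · -- sup
        intro x y
        ext s
        have h2 : ∀ i, F (x ⊔ y) i = F x i ∪ F y i := fun i => by
          simpa using congrFun (hsup x y) i
        simp only [Set.mem_setOf_eq, Set.mem_union]
        constructor
        · rintro ⟨i, t, rfl, ht⟩
          rw [h2 i] at ht
          rcases ht with h | h
          exacts [Or.inl ⟨i, t, rfl, h⟩, Or.inr ⟨i, t, rfl, h⟩]
        · rintro (⟨i, t, rfl, ht⟩ | ⟨i, t, rfl, ht⟩)
          exacts [⟨i, t, rfl, by rw [h2 i]; exact Or.inl ht⟩,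
            ⟨i, t, rfl, by rw [h2 i]; exact Or.inr ht⟩]
      · -- compl
        intro x
        ext s
        have h2 : ∀ i, F xᶜ i = (F x i)ᶜ := fun i => by
          simpa using congrFun (hcompl x) i
        simp only [Set.mem_setOf_eq, Set.mem_diff]
        constructor
        · rintro ⟨i, t, rfl, ht⟩
          rw [h2 i] at ht
          refine ⟨⟨i, t, rfl⟩, ?_⟩
          intro hmem
          exact ht ((mem_g x i t).mp hmem)
        · rintro ⟨⟨i, t, rfl⟩, hns⟩
          refine ⟨i, t, rfl, ?_⟩
          rw [h2 i]
          exact fun ht => hns ((mem_g x i t).mpr ht)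
      · -- cyl
        intro j x
        ext s
        have h2 : ∀ i, F (cA.c j x) i = fullC j (F x i) := fun i => congrFun (hc j x) i
        simp only [Set.mem_setOf_eq, cylOp, fullC]
        constructor
        · rintro ⟨i, t, rfl, ht⟩
          rw [h2 i] at ht
          obtain ⟨t', ht', hag⟩ := ht
          refine ⟨⟨i, t, rfl⟩, embFun i t', (mem_g x i t').mpr ht', ?_⟩
          intro k hk
          show (⟨i, t' k⟩ : Σ j, U j) = ⟨i, t k⟩
          rw [hag k hk]
        · rintro ⟨⟨i, t, rfl⟩, u, hu, hag⟩
          obtain ⟨i', t', rfl, ht'⟩ := hu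
          obtain ⟨k0, hk0⟩ := exists_ne j
          have h3 : embFun i' t' k0 = embFun i t k0 := hag k0 hk0
          have h4 : i' = i := congrArg Sigma.fst h3
          subst h4
          refine ⟨i', t, rfl, ?_⟩
          rw [h2 i']
          refine ⟨t', ht', ?_⟩
          intro k hk
          have h5 : embFun i' t' k = embFun i' t k := hag k hk
          simpa [embFun] using h5
      · -- diag
        intro j k
        ext s
        have h2 : ∀ i, F (cA.d j k) i = fullD j k := fun i => congrFun (hd j k) i
        simp only [Set.mem_setOf_eq, diagSet, fullD]
        constructor
        · rintro ⟨i, t, rfl, ht⟩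
          rw [h2 i] at ht
          refine ⟨⟨i, t, rfl⟩, ?_⟩
          show (⟨i, t j⟩ : Σ j, U j) = ⟨i, t k⟩
          rw [ht]
        · rintro ⟨⟨i, t, rfl⟩, hjk⟩
          refine ⟨i, t, rfl, ?_⟩
          rw [h2 i]
          have h5 : embFun i t j = embFun i t k := hjk
          simpa [embFun, fullD] using h5
    · -- complete additivity
      intro S a hS
      apply Set.Subset.antisymm
      · intro p hp
        obtain ⟨i, t, rfl, ht⟩ := hp
        by_contra hnot
        have hnotmem : ∀ x ∈ S, t ∉ F x i := by
          intro x hx hmem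
          exact hnot (Set.mem_biUnion hx ⟨i, t, rfl, hmem⟩)
        have hlub2 : IsLUB (insert aᶜ S) ⊤ := by
          constructor
          · intro x _
            exact le_top
          · intro b hb
            have hab : a ≤ b := hS.2 (fun x hx => hb (Set.mem_insert_of_mem _ hx))
            have hcb : aᶜ ≤ b := hb (Set.mem_insert _ _)
            calc (⊤ : A) = a ⊔ aᶜ := sup_compl_eq_top.symm
            _ ≤ b := sup_le hab hcb
        have hFlub := hlub (insert aᶜ S) hlub2
        have hub : (fun i' => {t' : Fin n → U i' | embFun i' t' ≠ embFun i t}) ∈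
            upperBounds (F '' insert aᶜ S) := by
          rintro _ ⟨x, hx, rfl⟩
          intro i' t' ht' heq
          obtain rfl := embFun_fst hn0 heq
          obtain rfl := embFun_snd heq
          rcases hx with rfl | hx
          · have h2 : ∀ ii, F aᶜ ii = (F a ii)ᶜ := fun ii => by
              simpa using congrFun (hcompl a) ii
            rw [h2] at ht'
            exact ht' ht
          · exact hnotmem x hx ht'
        have hle := hFlub.2 hub
        exact (hle i trivial) rfl
      · intro p hp
        rcases Set.mem_iUnion₂.mp hp with ⟨x, hxS, hx⟩
        obtain ⟨i, t, rfl, ht⟩ := hx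
        exact ⟨i, t, rfl, Fmono (hS.1 hxS) i ht⟩
end
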